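/- arXiv:1308.3180 — 6 statements merged into one kernel-verified Lean document; each statement's English description precedes it below -/
import Mathlib

section
/- For every positive integer N there exists a nontrivial finite group G whose genus increment N_G equals N, where N_G = ε · ∏_{p | |G|} p^{n_p − e_p}, with G_p a Sylow p-subgroup of G of order p^{n_p} and exponent p^{e_p}, and ε = 1/2 if the Sylow 2-subgroup of G is nontrivial and is not of GK-type, and ε = 1 otherwise. -/
/-- A nontrivial finite `p`-group is of Gorenstein–Kulkarni type if the set of
its elements of non-maximal order forms a subgroup of index `p`. -/
def IsGKType (p : ℕ) (G : Type*) [Group G] : Prop :=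
  Finite G ∧ Nontrivial G ∧ IsPGroup p G ∧
    ∃ K : Subgroup G, ((K : Set G) = {y : G | orderOf y < Monoid.exponent G}) ∧
      K.index = p

open Subgroup


section Aux

variable {G : Type*} [CommGroup G] [Finite G] {p : ℕ} [Fact p.Prime]

lemma mem_sylow_of_orderOf_eq_pow (P : Sylow p G) {g : G} {k : ℕ}
    (hg : orderOf g = p ^ k) : g ∈ P := by
  have hpg : IsPGroup p (Subgroup.zpowers g) :=
    IsPGroup.of_card ((Nat.card_zpowers g).trans hg)
  obtain ⟨Q, hQ⟩ := hpg.exists_le_sylow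
  obtain ⟨x, hx⟩ := MulAction.exists_smul_eq G Q P
  rw [Sylow.smul_eq_of_normal] at hx
  exact hx ▸ hQ (Subgroup.mem_zpowers g)

lemma sylow_exponent (P : Sylow p G) :
    Monoid.exponent ↥P = p ^ (Monoid.exponent G).factorization p := by
  set v := (Monoid.exponent G).factorization p with hv
  have hG : Monoid.exponent G ≠ 0 := Monoid.exponent_ne_zero_of_finite
  apply Nat.dvd_antisymm
  · refine Monoid.exponent_dvd_of_forall_pow_eq_one fun y => ?_
    obtain ⟨k, hk⟩ := (IsPGroup.iff_orderOf.mp P.2) y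
    have h1 : orderOf y ∣ Monoid.exponent G := by
      rw [← Subgroup.orderOf_coe]
      exact Monoid.order_dvd_exponent _
    rw [hk] at h1
    have : k ≤ v := (Nat.Prime.pow_dvd_iff_le_factorization Fact.out hG).mp h1
    rw [← orderOf_dvd_iff_pow_eq_one, hk]
    exact pow_dvd_pow p this
  · obtain ⟨g, hg⟩ := (Fact.out : p.Prime).exists_orderOf_eq_pow_factorization_exponent G
    have hmem : g ∈ P := mem_sylow_of_orderOf_eq_pow P hg
    have : orderOf (⟨g, hmem⟩ : ↥P) = p ^ v := by rw [Subgroup.orderOf_mk, hg]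
    exact this ▸ Monoid.order_dvd_exponent _

end Aux

lemma card_pow_ker (m k : ℕ) (hm : m ≠ 0) :
    Nat.card (MonoidHom.ker (powMonoidHom k :
      Multiplicative (ZMod m) →* Multiplicative (ZMod m))) = m.gcd k := by
  haveI : NeZero m := ⟨hm⟩
  obtain ⟨g₀, hg₀⟩ := IsCyclic.exists_generator (α := Multiplicative (ZMod m))
  have hog : orderOf g₀ = m := by
    simp [orderOf_eq_card_of_forall_mem_zpowers hg₀, ZMod.card]
  have hrange : (powMonoidHom k : Multiplicative (ZMod m) →* _).range
      = Subgroup.zpowers (g₀ ^ k) := by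
    ext y
    constructor
    · rintro ⟨x, rfl⟩
      obtain ⟨t, rfl⟩ := hg₀ x
      refine ⟨t, ?_⟩
      simp only [powMonoidHom_apply]
      simp [← zpow_natCast, ← zpow_mul, mul_comm]
    · rintro ⟨t, rfl⟩
      exact ⟨g₀ ^ t, by simp only [powMonoidHom_apply]; simp [← zpow_natCast, ← zpow_mul, mul_comm]⟩
  have hidx : (MonoidHom.ker (powMonoidHom k : Multiplicative (ZMod m) →* _)).index
      = m / m.gcd k := by
    rw [Subgroup.index_ker, hrange, Nat.card_zpowers, orderOf_pow, hog]
  have hmul := Subgroup.card_mul_index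
    (MonoidHom.ker (powMonoidHom k : Multiplicative (ZMod m) →* _))
  rw [hidx] at hmul
  have hcardG : Nat.card (Multiplicative (ZMod m)) = m := by
    simp [Nat.card_eq_fintype_card, ZMod.card]
  rw [hcardG] at hmul
  have hgcd : m.gcd k ∣ m := Nat.gcd_dvd_left m k
  have hgpos : 0 < m.gcd k := Nat.gcd_pos_of_pos_left k (Nat.pos_of_ne_zero hm)
  have hne : m / m.gcd k ≠ 0 :=
    Nat.div_ne_zero_iff.mpr ⟨hgpos.ne', Nat.le_of_dvd (Nat.pos_of_ne_zero hm) hgcd⟩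
  refine Nat.eq_of_mul_eq_mul_right (Nat.pos_of_ne_zero hne) ?_
  rw [hmul, Nat.mul_div_cancel' hgcd]

section Main

variable (N : ℕ) [NeZero N]

abbrev GG := Multiplicative (ZMod (2 * N)) × Multiplicative (ZMod N)

instance : NeZero (2 * N) := ⟨by have := NeZero.ne N; omega⟩

lemma card_GG : Nat.card (GG N) = 2 * N * N := by
  simp [Nat.card_eq_fintype_card, ZMod.card]

lemma exp_GG : Monoid.exponent (GG N) = 2 * N := by
  rw [Monoid.exponent_prod, Monoid.exponent_multiplicative, Monoid.exponent_multiplicative,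
    ZMod.exponent, ZMod.exponent]
  exact Nat.dvd_antisymm (Nat.lcm_dvd dvd_rfl (dvd_mul_left N 2)) (Nat.dvd_lcm_left _ _)


lemma gk_GG (P₂ : Sylow 2 (GG N)) : IsGKType 2 ↥P₂ := by
  haveI : Fact (Nat.Prime 2) := ⟨Nat.prime_two⟩
  have hN : N ≠ 0 := NeZero.ne N
  have h2N : (2 * N) ≠ 0 := NeZero.ne _
  have hc : (2 * N * N) ≠ 0 := by positivity
  set a := N.factorization 2 with ha
  have hfN : (2 * N).factorization 2 = a + 1 := by
    rw [Nat.factorization_mul two_ne_zero hN, Finsupp.add_apply,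
      Nat.Prime.factorization_self Nat.prime_two]
    omega
  have hfc : (2 * N * N).factorization 2 = 2 * a + 1 := by
    rw [Nat.factorization_mul h2N hN, Finsupp.add_apply, hfN]
    omega
  have hcardP' : Nat.card ↥(P₂ : Subgroup (GG N)) = 2 ^ (2 * a + 1) := by
    have := P₂.card_eq_multiplicity
    rw [card_GG, hfc] at this
    exact this
  have hcardP : Nat.card ↥P₂ = 2 ^ (2 * a + 1) := hcardP'
  have hexpP : Monoid.exponent ↥P₂ = 2 ^ (a + 1) := by
    rw [sylow_exponent, exp_GG, hfN]
  have hdvdN : (2 : ℕ) ^ a ∣ N := Nat.ordProj_dvd N 2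
  -- the subgroup of elements of order dividing 2 ^ a
  set ψ : GG N →* GG N := powMonoidHom (2 ^ a) with hψ
  set H : Subgroup (GG N) := MonoidHom.ker ψ with hH
  have hmemH : ∀ y : GG N, y ∈ H ↔ y ^ (2 ^ a) = 1 := fun y => Iff.rfl
  have hHP : H ≤ (P₂ : Subgroup (GG N)) := by
    intro y hy
    have : orderOf y ∣ 2 ^ a := orderOf_dvd_of_pow_eq_one ((hmemH y).mp hy)
    obtain ⟨j, _, hj⟩ := (Nat.dvd_prime_pow Nat.prime_two).mp this
    exact mem_sylow_of_orderOf_eq_pow P₂ hj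
  -- cardinality of H
  have hcardH : Nat.card ↥H = 2 ^ a * 2 ^ a := by
    have hker : H = (MonoidHom.ker (powMonoidHom (2 ^ a) :
          Multiplicative (ZMod (2 * N)) →* _)).prod
        (MonoidHom.ker (powMonoidHom (2 ^ a) : Multiplicative (ZMod N) →* _)) := by
      ext ⟨y₁, y₂⟩
      simp [hH, hψ, MonoidHom.mem_ker, Subgroup.mem_prod, powMonoidHom_apply,
        Prod.pow_mk, Prod.ext_iff]
    rw [hker, Nat.card_congr (Subgroup.prodEquiv _ _).toEquiv, Nat.card_prod,
      card_pow_ker _ _ h2N, card_pow_ker _ _ hN,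
      Nat.gcd_eq_right (hdvdN.mul_left 2), Nat.gcd_eq_right hdvdN]
  -- the index computation
  have hKidx : (H.subgroupOf P₂).index = 2 := by
    have e1 : Nat.card ↥H * H.index = 2 * N * N := by
      rw [Subgroup.card_mul_index, card_GG]
    have e2 : Nat.card ↥(P₂ : Subgroup (GG N)) * (P₂ : Subgroup (GG N)).index
        = 2 * N * N := by
      rw [Subgroup.card_mul_index, card_GG]
    have e3 := Subgroup.relIndex_mul_index hHP
    have hrel : H.relIndex ↑P₂ = (H.subgroupOf P₂).index := rfl
    rw [hrel] at e3
    rw [← e3, hcardH] at e1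
    rw [hcardP'] at e2
    have hPidx : (P₂ : Subgroup (GG N)).index ≠ 0 := Subgroup.index_ne_zero_of_finite
    have h2exp : (2:ℕ) ^ (2 * a + 1) = 2 ^ a * 2 ^ a * 2 := by
      rw [two_mul, pow_succ, pow_add]
    have hcomb : 2 ^ a * 2 ^ a * ((H.subgroupOf P₂).index * (P₂ : Subgroup (GG N)).index)
        = 2 ^ a * 2 ^ a * (2 * (P₂ : Subgroup (GG N)).index) := by
      rw [e1, ← e2, h2exp, mul_assoc]
    have hp1 : (0:ℕ) < 2 ^ a * 2 ^ a := by positivity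
    have h4 := Nat.eq_of_mul_eq_mul_left hp1 hcomb
    exact Nat.eq_of_mul_eq_mul_right (Nat.pos_of_ne_zero hPidx) h4
  refine ⟨inferInstance, ?_, P₂.2, H.subgroupOf P₂, ?_, hKidx⟩
  · rw [← Finite.one_lt_card_iff_nontrivial, hcardP]
    exact Nat.one_lt_two_pow (by omega)
  · ext y
    simp only [SetLike.mem_coe, Subgroup.mem_subgroupOf, Set.mem_setOf_eq, hexpP, hH,
      MonoidHom.mem_ker, hψ, powMonoidHom_apply]
    constructor
    · intro h
      have hdvd : orderOf y ∣ 2 ^ a := by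
        rw [← Subgroup.orderOf_coe, orderOf_dvd_iff_pow_eq_one]
        exact h
      calc orderOf y ≤ 2 ^ a := Nat.le_of_dvd (pow_pos two_pos a) hdvd
        _ < 2 ^ (a + 1) := Nat.pow_lt_pow_right one_lt_two (by omega)
    · intro h
      have hdvd : orderOf y ∣ 2 ^ (a + 1) := hexpP ▸ Monoid.order_dvd_exponent y
      obtain ⟨j, hj, hjeq⟩ := (Nat.dvd_prime_pow Nat.prime_two).mp hdvd
      have hja : j ≤ a := by
        by_contra hja
        have hj1 : j = a + 1 := by omega
        rw [hjeq, hj1] at h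
        omega
      have hdvd' : orderOf y ∣ 2 ^ a := hjeq ▸ pow_dvd_pow 2 hja
      have h1 : y ^ 2 ^ a = 1 := orderOf_dvd_iff_pow_eq_one.mp hdvd'
      have := congrArg (Subtype.val) h1
      exact Subgroup.mem_subgroupOf.mpr (MonoidHom.mem_ker.mpr (by simpa [powMonoidHom_apply] using this))

end Main

open Classical in
/-- For every positive integer `N` there is a nontrivial finite group `G`
whose genus increment `N_G` equals `N`. -/
theorem stmt2 (N : ℕ) (hN : 0 < N) :
    ∃ (G : Type) (_ : Group G) (_ : Fintype G), Nontrivial G ∧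
      ∀ n e : ℕ → ℕ,
        (∀ p : ℕ, p.Prime → p ∣ Nat.card G →
          ∀ P : Sylow p G, Nat.card P = p ^ n p ∧ Monoid.exponent P = p ^ e p) →
        ∀ P₂ : Sylow 2 G,
          (N : ℚ) =
            (if Nat.card P₂ ≠ 1 ∧ ¬ IsGKType 2 P₂ then (1 / 2 : ℚ) else 1) *
              ∏ p ∈ (Nat.card G).primeFactors, (p : ℚ) ^ (n p - e p) := by
  haveI : NeZero N := ⟨hN.ne'⟩
  haveI : Fact (1 < 2 * N) := ⟨by omega⟩
  refine ⟨GG N, inferInstance, inferInstance, inferInstance, ?_⟩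
  intro n e hne P₂
  have hN0 : N ≠ 0 := hN.ne'
  have h2N : 2 * N ≠ 0 := by omega
  have hc0 : 2 * N * N ≠ 0 := by positivity
  have hcard := card_GG N
  have key : ∀ p, p.Prime → p ∣ 2 * N * N →
      n p = (2 * N * N).factorization p ∧ e p = (2 * N).factorization p := by
    intro p pp pd
    haveI := Fact.mk pp
    have hpd : p ∣ Nat.card (GG N) := by rw [hcard]; exact pd
    obtain ⟨P⟩ : Nonempty (Sylow p (GG N)) := inferInstance
    obtain ⟨h1, h2⟩ := hne p pp hpd P
    constructor
    · have hcm := P.card_eq_multiplicity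
      rw [hcard] at hcm
      have hp2 : (p:ℕ) ^ n p = p ^ (2 * N * N).factorization p := by
        rw [← h1]; exact hcm
      exact Nat.pow_right_injective pp.two_le hp2
    · have hea := sylow_exponent P
      rw [exp_GG] at hea
      have hp2 : (p:ℕ) ^ e p = p ^ (2 * N).factorization p := by
        rw [← h2]; exact hea
      exact Nat.pow_right_injective pp.two_le hp2
  have hgk := gk_GG N P₂
  rw [if_neg (fun h => h.2 hgk), one_mul, hcard]
  have hprod : ∀ p ∈ (2 * N * N).primeFactors,
      (p:ℚ) ^ (n p - e p) = (p:ℚ) ^ N.factorization p := by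
    intro p hp
    obtain ⟨pp, pd, -⟩ := Nat.mem_primeFactors.mp hp
    obtain ⟨hn', he'⟩ := key p pp pd
    congr 1
    rw [hn', he', Nat.factorization_mul h2N hN0, Finsupp.add_apply]
    omega
  rw [Finset.prod_congr rfl hprod]
  have hsub : N.primeFactors ⊆ (2 * N * N).primeFactors :=
    Nat.primeFactors_mono (Dvd.intro_left (2 * N) rfl) hc0
  have hNprod : ∏ p ∈ (2 * N * N).primeFactors, p ^ N.factorization p = N := by
    rw [← Finset.prod_subset hsub (fun x _ hx => by
      have : N.factorization x = 0 := Finsupp.notMem_support_iff.mp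
        (by rwa [Nat.support_factorization])
      rw [this, pow_zero])]
    exact Nat.factorization_prod_pow_eq_self hN0
  have hcast : ((∏ p ∈ (2 * N * N).primeFactors, p ^ N.factorization p : ℕ) : ℚ)
      = ∏ p ∈ (2 * N * N).primeFactors, (p:ℚ) ^ N.factorization p := by
    push_cast; rfl
  rw [← hcast, hNprod]
end

section
/- Let p be a prime and let R be a finite p-group of order p^n and exponent p^e which is not of GK-type. Then the following are equivalent: (i) for every l ≥ 1 there exists a chain of finite p-groups G = G_0 ≥ G_1 ≥ … ≥ G_l such that for each 0 ≤ i < l the group G_i is of GK-type with G_{i+1} = κ(G_i), and G_l is isomorphic to R; (ii) the exponent of the center Z(R) of R equals p^e. -/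
set_option linter.unusedSectionVars false
set_option maxHeartbeats 1000000


/-- The GK-core `κ(H)` of a subgroup `H`, i.e. the set of elements of `H` of
non-maximal order. -/
def kappaSet {G : Type*} [Group G] (H : Subgroup G) : Set G :=
  {y : G | y ∈ H ∧ orderOf y < Monoid.exponent H}


open Subgroup

section Construction

variable {R : Type} [Group R] (p e l : ℕ)

/-- the cyclic part -/
abbrev qq : ℕ := p ^ (e + l)

/-- the generator map ℤ → multiplicative cyclic group -/
def cc (t : ℤ) : Multiplicative (ZMod (qq p e l)) :=
  Multiplicative.ofAdd ((t : ZMod (qq p e l)))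

lemma cc_mul (a b : ℤ) : cc p e l (a + b) = cc p e l a * cc p e l b := by
  simp [cc, ← ofAdd_add]

lemma cc_zpow (t j : ℤ) : cc p e l t ^ j = cc p e l (t * j) := by
  simp [cc, ← ofAdd_zsmul, zsmul_eq_mul, mul_comm]

lemma cc_pow (t : ℤ) (u : ℕ) : cc p e l t ^ u = cc p e l (t * u) := by
  rw [← zpow_natCast, cc_zpow]

lemma cc_eq_one_iff (t : ℤ) : cc p e l t = 1 ↔ ((qq p e l : ℤ)) ∣ t := by
  rw [cc, ← ofAdd_zero, Multiplicative.ofAdd.apply_eq_iff_eq,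
    ZMod.intCast_zmod_eq_zero_iff_dvd]

lemma cc_eq_iff (a b : ℤ) : cc p e l a = cc p e l b ↔ ((qq p e l : ℤ)) ∣ a - b := by
  constructor
  · intro h
    have : cc p e l (a - b) * cc p e l b = cc p e l b := by
      rw [← cc_mul]; simpa using h
    have h2 : cc p e l (a - b) = 1 := by
      exact mul_right_cancel (b := cc p e l b) (by simpa using this)
    rwa [cc_eq_one_iff] at h2
  · intro h
    have : cc p e l (a - b) = 1 := (cc_eq_one_iff p e l _).2 h
    have := congrArg (· * cc p e l b) this
    simpa [← cc_mul] using this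

variable (z : R)

/-- the glue element -/
def ww : R × Multiplicative (ZMod (qq p e l)) := (z⁻¹, cc p e l (p ^ l))

def NN : Subgroup (R × Multiplicative (ZMod (qq p e l))) := Subgroup.zpowers (ww p e l z)

lemma ww_zpow (j : ℤ) : (ww p e l z) ^ j = (z ^ (-j), cc p e l (p ^ l * j)) := by
  simp [ww, Prod.pow_def, cc_zpow, zpow_neg, inv_zpow]

lemma mem_NN_iff {a : R} {d : Multiplicative (ZMod (qq p e l))} :
    (a, d) ∈ NN p e l z ↔ ∃ j : ℤ, a = z ^ (-j) ∧ d = cc p e l (p ^ l * j) := by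
  rw [NN, Subgroup.mem_zpowers_iff]
  constructor
  · rintro ⟨j, hj⟩
    rw [ww_zpow, Prod.ext_iff] at hj
    exact ⟨j, hj.1.symm, hj.2.symm⟩
  · rintro ⟨j, rfl, rfl⟩
    exact ⟨j, by rw [ww_zpow]⟩


variable [hzf : Fact (∀ r : R, z * r = r * z)]

lemma ww_comm (x : R × Multiplicative (ZMod (qq p e l))) : Commute x (ww p e l z) := by
  have h0 : Commute x.1 z := ((hzf.out x.1) : Commute z x.1).symm
  have h1 : Commute x.1 z⁻¹ := h0.inv_right
  have h2 : Commute x.2 (cc p e l (p ^ l)) := mul_comm _ _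
  exact Prod.ext h1 h2

instance NN_normal : (NN p e l z).Normal := by
  constructor
  intro x hx g
  have hc : Commute g x := by
    obtain ⟨j, hj⟩ := Subgroup.mem_zpowers_iff.mp hx
    rw [← hj]
    exact ((ww_comm p e l z g).zpow_right j)
  rwa [hc.eq, mul_assoc, mul_inv_cancel, mul_one]

/-- the big group -/
def bigG := (R × Multiplicative (ZMod (qq p e l))) ⧸ NN p e l z

instance : Group (bigG p e l z) := QuotientGroup.Quotient.group _

/-- projection -/
def pr : (R × Multiplicative (ZMod (qq p e l))) →* bigG p e l z := QuotientGroup.mk' _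

lemma pr_surjective : Function.Surjective (pr p e l z) := QuotientGroup.mk'_surjective _

lemma pr_eq_one_iff (x : R × Multiplicative (ZMod (qq p e l))) :
    pr p e l z x = 1 ↔ x ∈ NN p e l z := by
  rw [← QuotientGroup.ker_mk' (NN p e l z), MonoidHom.mem_ker]; rfl

/-- the layer subgroups upstairs -/
def SS (i : ℕ) : Subgroup (R × Multiplicative (ZMod (qq p e l))) :=
  (⊤ : Subgroup R).prod (Subgroup.zpowers (cc p e l (p ^ i)))

/-- the layer subgroups -/
def HH (i : ℕ) : Subgroup (bigG p e l z) := (SS p e l i).map (pr p e l z)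

lemma mem_HH_iff {i : ℕ} {x : bigG p e l z} :
    x ∈ HH p e l z i ↔ ∃ (r : R) (j : ℤ), x = pr p e l z (r, cc p e l (p ^ i * j)) := by
  rw [HH, Subgroup.mem_map]
  constructor
  · rintro ⟨⟨r, d⟩, hs, rfl⟩
    rw [SS, Subgroup.mem_prod] at hs
    obtain ⟨j, hj⟩ := Subgroup.mem_zpowers_iff.mp hs.2
    exact ⟨r, j, by rw [← cc_zpow, hj]⟩
  · rintro ⟨r, j, rfl⟩
    refine ⟨(r, cc p e l (p ^ i * j)), ?_, rfl⟩
    rw [SS, Subgroup.mem_prod]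
    exact ⟨trivial, Subgroup.mem_zpowers_iff.mpr ⟨j, by rw [cc_zpow]⟩⟩


lemma pr_pow (r : R) (t : ℤ) (u : ℕ) :
    (pr p e l z (r, cc p e l t)) ^ u = pr p e l z (r ^ u, cc p e l (t * u)) := by
  rw [← map_pow]
  congr 1
  rw [Prod.pow_mk, cc_pow]

lemma qq_cast_split (a b : ℕ) (hab : a + b = e + l) :
    (qq p e l : ℤ) = (p : ℤ) ^ a * (p : ℤ) ^ b := by
  rw [← pow_add, hab, qq]
  push_cast
  rfl

lemma key_dvd (hzo : orderOf z = p ^ e) {t : ℤ}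
    (h : pr p e l z ((1 : R), cc p e l t) = 1) : ((qq p e l : ℤ)) ∣ t := by
  rw [pr_eq_one_iff, mem_NN_iff] at h
  obtain ⟨j, hj1, hj2⟩ := h
  have hz1 : z ^ (-j) = 1 := hj1.symm
  have hdj : ((p : ℤ) ^ e) ∣ -j := by
    have h0 : ((orderOf z : ℤ)) ∣ -j := orderOf_dvd_iff_zpow_eq_one.mpr hz1
    rw [hzo] at h0
    exact_mod_cast h0
  have hdj' : ((p : ℤ) ^ e) ∣ j := (dvd_neg.mp hdj)
  have h5 : ((qq p e l : ℤ)) ∣ (p : ℤ) ^ l * j := by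
    rw [qq_cast_split p e l l e (by omega)]
    exact mul_dvd_mul_left _ hdj'
  have h6 := (cc_eq_iff p e l _ _).mp hj2
  have h7 := dvd_add h6 h5
  simpa using h7

lemma HH_mem_special {i : ℕ} :
    pr p e l z (1, cc p e l (p ^ i)) ∈ HH p e l z i := by
  rw [mem_HH_iff]
  exact ⟨1, 1, by rw [mul_one]⟩

lemma HH_pow_eq_one (hR : Monoid.exponent R = p ^ e) {i : ℕ} (hi : i ≤ l)
    {x : bigG p e l z} (hx : x ∈ HH p e l z i) : x ^ (p ^ (e + l - i)) = 1 := by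
  obtain ⟨r, j, rfl⟩ := (mem_HH_iff p e l z).mp hx
  rw [pr_pow]
  have h1 : r ^ p ^ (e + l - i) = 1 := by
    have h2 : r ^ p ^ e = 1 := by rw [← hR]; exact Monoid.pow_exponent_eq_one r
    have h3 : p ^ (e + l - i) = p ^ e * p ^ (l - i) := by rw [← pow_add]; congr 1; omega
    rw [h3, pow_mul, h2, one_pow]
  have h4 : cc p e l ((p : ℤ) ^ i * j * ((p ^ (e + l - i) : ℕ) : ℤ)) = 1 := by
    rw [cc_eq_one_iff]
    have h5 : ((p : ℤ)) ^ i * j * ((p ^ (e + l - i) : ℕ) : ℤ) = (qq p e l : ℤ) * j := by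
      rw [qq_cast_split p e l i (e + l - i) (by omega)]
      push_cast
      ring
    rw [h5]
    exact Dvd.intro _ rfl
  rw [h1, h4]
  exact map_one _

lemma HH_orderOf_special (hR : Monoid.exponent R = p ^ e) (hzo : orderOf z = p ^ e)
    (hp : p.Prime) {i : ℕ} (hi : i ≤ l) :
    orderOf (pr p e l z (1, cc p e l (p ^ i))) = p ^ (e + l - i) := by
  have h1 : (pr p e l z (1, cc p e l (p ^ i))) ^ (p ^ (e + l - i)) = 1 :=
    HH_pow_eq_one p e l z hR hi (HH_mem_special p e l z)
  have h2 : ∀ u : ℕ, (pr p e l z (1, cc p e l (p ^ i))) ^ u = 1 → p ^ (e + l - i) ∣ u := by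
    intro u hu
    rw [pr_pow, one_pow] at hu
    have h3 := key_dvd p e l z hzo hu
    have h4 : ((p : ℤ) ^ i * ((p : ℤ) ^ (e + l - i))) ∣ (p : ℤ) ^ i * u := by
      rw [← qq_cast_split p e l i (e + l - i) (by omega)]
      exact h3
    have h5 : ((p : ℤ) ^ (e + l - i)) ∣ (u : ℤ) :=
      (mul_dvd_mul_iff_left (a := (p : ℤ) ^ i)
        (pow_ne_zero _ (by exact_mod_cast hp.ne_zero))).mp h4
    exact_mod_cast h5
  exact Nat.dvd_antisymm (orderOf_dvd_of_pow_eq_one h1) (h2 _ (pow_orderOf_eq_one _))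

lemma HH_exp (hR : Monoid.exponent R = p ^ e) (hzo : orderOf z = p ^ e)
    (hp : p.Prime) {i : ℕ} (hi : i ≤ l) :
    Monoid.exponent ↥(HH p e l z i) = p ^ (e + l - i) := by
  apply Nat.dvd_antisymm
  · apply Monoid.exponent_dvd_of_forall_pow_eq_one
    intro y
    apply Subtype.ext
    rw [SubgroupClass.coe_pow]
    exact HH_pow_eq_one p e l z hR hi y.2
  · have horder : orderOf (⟨_, HH_mem_special p e l z (i := i)⟩ : ↥(HH p e l z i))
        = p ^ (e + l - i) := by
      rw [Subgroup.orderOf_mk]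
      exact HH_orderOf_special p e l z hR hzo hp hi
    rw [← horder]
    exact Monoid.order_dvd_exponent _


lemma HH_succ_le (i : ℕ) : HH p e l z (i + 1) ≤ HH p e l z i := by
  intro x hx
  obtain ⟨r, j, rfl⟩ := (mem_HH_iff p e l z).mp hx
  rw [mem_HH_iff]
  refine ⟨r, p * j, ?_⟩
  congr 2
  push_cast
  ring

lemma pow_mem_next (hR : Monoid.exponent R = p ^ e) (hzo : orderOf z = p ^ e)
    (hp : p.Prime) {i : ℕ} (hi : i + 1 ≤ l) {x : bigG p e l z} (hx : x ∈ HH p e l z i)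
    (h1 : x ^ (p ^ (e + l - i - 1)) = 1) : x ∈ HH p e l z (i + 1) := by
  obtain ⟨r, j, rfl⟩ := (mem_HH_iff p e l z).mp hx
  rw [pr_pow] at h1
  have hr : r ^ p ^ (e + l - i - 1) = 1 := by
    have h2 : r ^ p ^ e = 1 := by rw [← hR]; exact Monoid.pow_exponent_eq_one r
    have h3 : p ^ (e + l - i - 1) = p ^ e * p ^ (l - i - 1) := by
      rw [← pow_add]; congr 1; omega
    rw [h3, pow_mul, h2, one_pow]
  rw [hr] at h1
  have h3 := key_dvd p e l z hzo h1
  -- q ∣ p^i * j * p^(e+l-i-1) = p^(e+l-1) * j, q = p^(e+l-1) * p, so p ∣ j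
  have h4 : ((p : ℤ) ^ (e + l - 1) * (p : ℤ)) ∣ ((p : ℤ) ^ (e + l - 1)) * j := by
    have h5 : (p : ℤ) ^ i * j * ((p ^ (e + l - i - 1) : ℕ) : ℤ)
        = ((p : ℤ) ^ (e + l - 1)) * j := by
      have hexp2 : (p:ℤ) ^ i * ((p ^ (e + l - i - 1) : ℕ) : ℤ) = (p:ℤ) ^ (e + l - 1) := by
        push_cast
        rw [← pow_add]
        congr 1
        omega
      rw [mul_comm ((p:ℤ)^i) j, mul_assoc, hexp2, mul_comm]
    have h6 : (qq p e l : ℤ) = (p : ℤ) ^ (e + l - 1) * (p : ℤ) := by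
      have := qq_cast_split p e l (e + l - 1) 1 (by omega)
      rwa [pow_one] at this
    rw [← h6, ← h5]
    exact h3
  have h7 : (p : ℤ) ∣ j :=
    (mul_dvd_mul_iff_left (a := (p : ℤ) ^ (e + l - 1))
      (pow_ne_zero _ (by exact_mod_cast hp.ne_zero))).mp h4
  obtain ⟨j', rfl⟩ := h7
  rw [mem_HH_iff]
  refine ⟨r, j', ?_⟩
  congr 2
  push_cast
  ring

lemma HH_kappa (hR : Monoid.exponent R = p ^ e) (hzo : orderOf z = p ^ e)
    (hp : p.Prime) {i : ℕ} (hi : i + 1 ≤ l) :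
    ((HH p e l z (i + 1) : Subgroup (bigG p e l z)) : Set (bigG p e l z))
      = kappaSet (HH p e l z i) := by
  ext x
  simp only [SetLike.mem_coe, kappaSet, Set.mem_setOf_eq]
  rw [HH_exp p e l z hR hzo hp (by omega : i ≤ l)]
  constructor
  · intro hx
    refine ⟨HH_succ_le p e l z i hx, ?_⟩
    have h1 : x ^ (p ^ (e + l - (i + 1))) = 1 := HH_pow_eq_one p e l z hR hi hx
    have h2 : orderOf x ∣ p ^ (e + l - i - 1) := by
      have : e + l - (i + 1) = e + l - i - 1 := by omega
      rw [← this]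
      exact orderOf_dvd_of_pow_eq_one h1
    calc orderOf x ≤ p ^ (e + l - i - 1) := Nat.le_of_dvd (pow_pos hp.pos _) h2
      _ < p ^ (e + l - i) := Nat.pow_lt_pow_right hp.one_lt (by omega)
  · rintro ⟨hx, hlt⟩
    have h1 : orderOf x ∣ p ^ (e + l - i) :=
      orderOf_dvd_of_pow_eq_one (HH_pow_eq_one p e l z hR (by omega : i ≤ l) hx)
    obtain ⟨t, ht, hxt⟩ := (Nat.dvd_prime_pow hp).mp h1
    have ht' : t ≤ e + l - i - 1 := by
      rcases Nat.lt_or_ge t (e + l - i) with h | h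
      · omega
      · exfalso
        have : t = e + l - i := by omega
        rw [this] at hxt
        omega
    apply pow_mem_next p e l z hR hzo hp hi hx
    apply orderOf_dvd_iff_pow_eq_one.mp
    rw [hxt]
    exact pow_dvd_pow p ht'


lemma cc_zero : cc p e l 0 = 1 := by simp [cc]

lemma cc_orderOf (hp : p.Prime) {i : ℕ} (hi : i ≤ l) :
    orderOf (cc p e l (p ^ i)) = p ^ (e + l - i) := by
  have hq : qq p e l ≠ 0 := pow_ne_zero _ hp.ne_zero
  have h1 : cc p e l (p ^ i) = Multiplicative.ofAdd (((p ^ i : ℕ) : ZMod (qq p e l))) := by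
    rw [cc]; congr 1; push_cast; rfl
  rw [h1, orderOf_ofAdd_eq_addOrderOf, ZMod.addOrderOf_coe _ hq]
  rw [Nat.gcd_comm, Nat.gcd_eq_left (pow_dvd_pow p (by omega : i ≤ e + l))]
  rw [qq, Nat.pow_div (by omega) hp.pos]

lemma NN_le_SS {i : ℕ} (hi : i ≤ l) : NN p e l z ≤ SS p e l i := by
  rw [NN, Subgroup.zpowers_le, SS, Subgroup.mem_prod]
  refine ⟨Subgroup.mem_top _, Subgroup.mem_zpowers_iff.mpr ⟨(p : ℤ) ^ (l - i), ?_⟩⟩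
  rw [cc_zpow, ← pow_add]
  congr 2
  omega

lemma ww_orderOf (hp : p.Prime) (hzo : orderOf z = p ^ e) :
    orderOf (ww p e l z) = p ^ e := by
  rw [ww, Prod.orderOf_mk, orderOf_inv, hzo]
  have h1 : orderOf (cc p e l ((p : ℤ) ^ l)) = p ^ e := by
    have h2 := cc_orderOf p e l hp (le_refl l)
    rwa [show e + l - l = e by omega] at h2
  rw [h1, Nat.lcm_self]

lemma card_NN (hp : p.Prime) (hzo : orderOf z = p ^ e) :
    Nat.card ↥(NN p e l z) = p ^ e := by
  rw [NN, Nat.card_zpowers, ww_orderOf p e l z hp hzo]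

lemma card_SS (n : ℕ) (hcard : Nat.card R = p ^ n) (hp : p.Prime) {i : ℕ} (hi : i ≤ l) :
    Nat.card ↥(SS (R := R) p e l i) = p ^ n * p ^ (e + l - i) := by
  have hce := Nat.card_congr (Subgroup.prodEquiv (⊤ : Subgroup R)
      (Subgroup.zpowers (cc p e l (p ^ i)))).toEquiv
  rw [SS, hce, Nat.card_prod, Nat.card_zpowers, cc_orderOf p e l hp hi]
  congr 1
  rw [← hcard]
  exact Nat.card_congr Subgroup.topEquiv.toEquiv

lemma card_HH (n : ℕ) (hcard : Nat.card R = p ^ n) (hp : p.Prime)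
    (hzo : orderOf z = p ^ e) {i : ℕ} (hi : i ≤ l) :
    Nat.card ↥(HH p e l z i) = p ^ (n + l - i) := by
  set f := (pr p e l z).domRestrict (SS p e l i) with hf
  have hrange : f.range = HH p e l z i := by
    ext y
    rw [MonoidHom.mem_range, HH, Subgroup.mem_map]
    constructor
    · rintro ⟨s, rfl⟩
      exact ⟨↑s, s.2, rfl⟩
    · rintro ⟨s, hs, rfl⟩
      exact ⟨⟨s, hs⟩, rfl⟩
  have hker : f.ker = (NN p e l z).subgroupOf (SS p e l i) := by
    ext s
    rw [MonoidHom.mem_ker, Subgroup.mem_subgroupOf, hf, MonoidHom.domRestrict_apply,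
      pr_eq_one_iff]
  have hkercard : Nat.card ↥f.ker = p ^ e := by
    rw [hker, ← card_NN p e l z hp hzo]
    exact Nat.card_congr (Subgroup.subgroupOfEquivOfLe (NN_le_SS p e l z hi)).toEquiv
  have hquot : Nat.card (↥(SS p e l i) ⧸ f.ker) = Nat.card ↥(HH p e l z i) := by
    rw [← hrange]
    exact Nat.card_congr (QuotientGroup.quotientKerEquivRange f).toEquiv
  have htot := Subgroup.card_eq_card_quotient_mul_card_subgroup f.ker
  rw [hquot, hkercard, card_SS p e l n hcard hp hi] at htot
  have harith : p ^ n * p ^ (e + l - i) = p ^ (n + l - i) * p ^ e := by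
    rw [← pow_add, ← pow_add]
    congr 1
    omega
  rw [harith] at htot
  exact (Nat.eq_of_mul_eq_mul_right (pow_pos hp.pos e) htot.symm)

lemma HH_zero (hp : p.Prime) : HH p e l z 0 = ⊤ := by
  have hS : SS (R := R) p e l 0 = ⊤ := by
    rw [SS]
    have hz : Subgroup.zpowers (cc p e l (p ^ 0)) = ⊤ := by
      haveI : NeZero (qq p e l) := ⟨pow_ne_zero _ hp.ne_zero⟩
      apply Subgroup.eq_top_of_card_eq
      rw [Nat.card_zpowers, cc_orderOf p e l hp (Nat.zero_le l),
        show Nat.card (Multiplicative (ZMod (qq p e l))) = qq p e l from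
          (Nat.card_congr Multiplicative.toAdd).trans (Nat.card_zmod _), qq]
      congr 1
    rw [hz, Subgroup.top_prod_top]
  rw [HH, hS, ← MonoidHom.range_eq_map]
  exact MonoidHom.range_eq_top_of_surjective _ (pr_surjective p e l z)

/-- the copy of `R` at the bottom -/
def psi : R →* bigG p e l z := (pr p e l z).comp (MonoidHom.inl R _)

lemma psi_injective (hp : p.Prime) (hzo : orderOf z = p ^ e) :
    Function.Injective (psi p e l z) := by
  apply (injective_iff_map_eq_one _).mpr
  intro r hr
  have h1 : pr p e l z (r, (1 : Multiplicative (ZMod (qq p e l)))) = 1 := hr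
  rw [pr_eq_one_iff, mem_NN_iff] at h1
  obtain ⟨j, hj1, hj2⟩ := h1
  have h2 : (qq p e l : ℤ) ∣ (p : ℤ) ^ l * j := by
    rw [← cc_eq_one_iff]
    exact hj2.symm
  have h3 : ((p : ℤ) ^ e) ∣ j := by
    rw [qq_cast_split p e l l e (by omega)] at h2
    exact (mul_dvd_mul_iff_left (pow_ne_zero _
      (by exact_mod_cast hp.ne_zero : (p : ℤ) ≠ 0))).mp h2
  have h4 : z ^ (-j) = 1 := by
    apply orderOf_dvd_iff_zpow_eq_one.mp
    rw [hzo]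
    push_cast
    exact dvd_neg.mpr h3
  rw [hj1, h4]

lemma psi_range : (psi p e l z).range = HH p e l z l := by
  ext x
  rw [MonoidHom.mem_range, mem_HH_iff]
  constructor
  · rintro ⟨r, rfl⟩
    refine ⟨r, 0, ?_⟩
    rw [mul_zero, cc_zero]
    rfl
  · rintro ⟨r, j, rfl⟩
    refine ⟨r * z ^ j, ?_⟩
    have hw : (ww p e l z) ^ j = (z ^ (-j), cc p e l ((p:ℤ) ^ l * j)) := ww_zpow p e l z j
    have hsplit : ((r * z ^ j, (1 : Multiplicative (ZMod (qq p e l)))) :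
        R × Multiplicative (ZMod (qq p e l))) * (ww p e l z) ^ j
        = (r, cc p e l ((p:ℤ) ^ l * j)) := by
      rw [hw]
      apply Prod.ext
      · show r * z ^ j * z ^ (-j) = r
        rw [mul_assoc, ← zpow_add, add_neg_cancel, zpow_zero, mul_one]
      · exact one_mul _
    have hw1 : pr p e l z ((ww p e l z) ^ j) = 1 :=
      (pr_eq_one_iff p e l z _).mpr (Subgroup.zpow_mem _ (Subgroup.mem_zpowers _) j)
    calc psi p e l z (r * z ^ j)
        = pr p e l z ((r * z ^ j, 1)) * pr p e l z ((ww p e l z) ^ j) := by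
          rw [hw1, mul_one]; rfl
      _ = pr p e l z (((r * z ^ j, 1)) * (ww p e l z) ^ j) := (map_mul _ _ _).symm
      _ = pr p e l z (r, cc p e l ((p:ℤ) ^ l * j)) := by rw [hsplit]

/-- iso between bottom layer and `R` -/
noncomputable def lastIso (hp : p.Prime) (hzo : orderOf z = p ^ e) :
    ↥(HH p e l z l) ≃* R :=
  (MulEquiv.subgroupCongr (psi_range p e l z).symm).trans
    (MonoidHom.ofInjective (psi_injective p e l z hp hzo)).symm


lemma bigG_finite [Finite R] (hp : p.Prime) : Finite (bigG p e l z) := by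
  haveI : NeZero (qq p e l) := ⟨pow_ne_zero _ hp.ne_zero⟩
  haveI : Finite (Multiplicative (ZMod (qq p e l))) :=
    Finite.of_equiv _ Multiplicative.ofAdd
  exact Finite.of_surjective _ (pr_surjective p e l z)

lemma bigG_pgroup (n : ℕ) (hcard : Nat.card R = p ^ n) (hp : p.Prime)
    (hzo : orderOf z = p ^ e) : IsPGroup p (bigG p e l z) := by
  apply IsPGroup.of_card (n := n + l)
  have h0 := card_HH p e l z n hcard hp hzo (Nat.zero_le l)
  rw [HH_zero p e l z hp] at h0
  rw [← Subgroup.card_top, h0]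
  congr 1

lemma HH_index [Finite R] (n : ℕ) (hcard : Nat.card R = p ^ n) (hp : p.Prime)
    (hzo : orderOf z = p ^ e) {i : ℕ} (hi : i + 1 ≤ l) :
    ((HH p e l z (i + 1)).subgroupOf (HH p e l z i)).index = p := by
  haveI := bigG_finite p e l z hp
  have h1 := Subgroup.index_mul_card ((HH p e l z (i + 1)).subgroupOf (HH p e l z i))
  have h2 : Nat.card ↥((HH p e l z (i + 1)).subgroupOf (HH p e l z i))
      = p ^ (n + l - i - 1) := by
    have h3 := Nat.card_congr
      (Subgroup.subgroupOfEquivOfLe (HH_succ_le p e l z i)).toEquiv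
    rw [h3, card_HH p e l z n hcard hp hzo hi]
    congr 1
  rw [h2, card_HH p e l z n hcard hp hzo (by omega : i ≤ l)] at h1
  have h4 : p ^ (n + l - i) = p * p ^ (n + l - i - 1) := by
    rw [← pow_succ']
    congr 1
    omega
  rw [h4] at h1
  exact Nat.eq_of_mul_eq_mul_right (pow_pos hp.pos _) h1

lemma HH_GKset (hR : Monoid.exponent R = p ^ e) (hzo : orderOf z = p ^ e)
    (hp : p.Prime) {i : ℕ} (hi : i + 1 ≤ l) :
    (((HH p e l z (i + 1)).subgroupOf (HH p e l z i)) :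
        Set ↥(HH p e l z i))
      = {y : ↥(HH p e l z i) | orderOf y < Monoid.exponent ↥(HH p e l z i)} := by
  have hk := HH_kappa p e l z hR hzo hp hi
  ext y
  simp only [SetLike.mem_coe, Subgroup.mem_subgroupOf, Set.mem_setOf_eq]
  constructor
  · intro hy
    have h1 : (y : bigG p e l z) ∈ kappaSet (HH p e l z i) := by
      rw [← hk]; exact hy
    have h2 := h1.2
    rwa [Subgroup.orderOf_coe] at h2
  · intro hy
    have h1 : (y : bigG p e l z) ∈ kappaSet (HH p e l z i) :=
      ⟨y.2, by rwa [Subgroup.orderOf_coe]⟩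
    rw [← hk] at h1
    exact h1

lemma HH_isGK [Finite R] (n : ℕ) (hcard : Nat.card R = p ^ n) (hp : p.Prime)
    (hzo : orderOf z = p ^ e) (hR : Monoid.exponent R = p ^ e) {i : ℕ} (hi : i + 1 ≤ l) :
    IsGKType p ↥(HH p e l z i) := by
  haveI := bigG_finite p e l z hp
  refine ⟨inferInstance, ?_, (bigG_pgroup p e l z n hcard hp hzo).to_subgroup _,
    (HH p e l z (i + 1)).subgroupOf (HH p e l z i),
    HH_GKset p e l z hR hzo hp hi, HH_index p e l z n hcard hp hzo hi⟩
  apply Finite.one_lt_card_iff_nontrivial.mp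
  rw [card_HH p e l z n hcard hp hzo (by omega : i ≤ l)]
  exact Nat.one_lt_pow (by omega) hp.one_lt

end Construction

lemma pgroup_exists_orderOf_eq_exponent {p : ℕ} {G : Type*} [Group G] [Finite G]
    (hp : p.Prime) (hG : IsPGroup p G) : ∃ g : G, orderOf g = Monoid.exponent G := by
  haveI : Fact p.Prime := ⟨hp⟩
  obtain ⟨g, hg⟩ := Finite.exists_max (fun x : G => orderOf x)
  refine ⟨g, Nat.dvd_antisymm (Monoid.order_dvd_exponent g) ?_⟩
  apply Monoid.exponent_dvd_of_forall_pow_eq_one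
  intro h
  obtain ⟨a, ha⟩ := (IsPGroup.iff_orderOf.mp hG) h
  obtain ⟨b, hb⟩ := (IsPGroup.iff_orderOf.mp hG) g
  apply orderOf_dvd_iff_pow_eq_one.mp
  rw [ha, hb]
  apply pow_dvd_pow
  have h2 := hg h
  simp only [ha, hb] at h2
  exact (Nat.pow_le_pow_iff_right hp.one_lt).mp h2

lemma backward_direction (p n e : ℕ) (hp : p.Prime) (R : Type) [Group R] [Finite R]
    (hpR : IsPGroup p R) (hcard : Nat.card R = p ^ n) (hexp : Monoid.exponent R = p ^ e)
    (hZ : Monoid.exponent (Subgroup.center R) = p ^ e) (l : ℕ) (hl : 1 ≤ l) :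
    ∃ (G : Type) (_ : Group G) (_ : Finite G), IsPGroup p G ∧
      ∃ K : Fin (l + 1) → Subgroup G,
        K 0 = ⊤ ∧
        (∀ i : Fin l, IsGKType p ↥(K i.castSucc) ∧
          ((K i.succ : Subgroup G) : Set G) = kappaSet (K i.castSucc)) ∧
        Nonempty (↥(K (Fin.last l)) ≃* R) := by
  obtain ⟨z₀, hz₀⟩ := pgroup_exists_orderOf_eq_exponent hp (hpR.to_subgroup (Subgroup.center R))
  rw [hZ] at hz₀
  have hzc : ∀ r : R, (z₀ : R) * r = r * (z₀ : R) :=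
    fun r => (Subgroup.mem_center_iff.mp z₀.2 r).symm
  haveI : Fact (∀ r : R, (z₀ : R) * r = r * (z₀ : R)) := ⟨hzc⟩
  have hzo : orderOf (z₀ : R) = p ^ e := by rw [← hz₀]; exact Subgroup.orderOf_coe z₀
  haveI hFin : Finite (bigG p e l (z₀ : R)) := bigG_finite p e l _ hp
  refine ⟨bigG p e l (z₀ : R), inferInstance, inferInstance,
    bigG_pgroup p e l _ n hcard hp hzo,
    fun i => HH p e l (z₀ : R) (i : ℕ), ?_, ?_, ?_⟩
  · show HH p e l (z₀ : R) ((0 : Fin (l + 1)) : ℕ) = ⊤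
    rw [Fin.val_zero]
    exact HH_zero p e l _ hp
  · intro i
    have hii : (i : ℕ) + 1 ≤ l := i.isLt
    constructor
    · show IsGKType p ↥(HH p e l (z₀ : R) ((i.castSucc : Fin (l + 1)) : ℕ))
      rw [Fin.coe_castSucc]
      exact HH_isGK p e l _ n hcard hp hzo hexp hii
    · show ((HH p e l (z₀ : R) ((i.succ : Fin (l + 1)) : ℕ)) : Set _)
        = kappaSet (HH p e l (z₀ : R) ((i.castSucc : Fin (l + 1)) : ℕ))
      rw [Fin.val_succ, Fin.coe_castSucc]
      exact HH_kappa p e l _ hexp hzo hp hii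
  · exact ⟨lastIso p e l _ hp hzo⟩

lemma forward_direction (p e : ℕ) (hp : p.Prime) (R : Type) [Group R] [Finite R]
    (hpR : IsPGroup p R) (hexp : Monoid.exponent R = p ^ e)
    (h : ∀ l : ℕ, 1 ≤ l →
      ∃ (G : Type) (_ : Group G) (_ : Finite G), IsPGroup p G ∧
        ∃ K : Fin (l + 1) → Subgroup G,
          K 0 = ⊤ ∧
          (∀ i : Fin l, IsGKType p ↥(K i.castSucc) ∧
            ((K i.succ : Subgroup G) : Set G) = kappaSet (K i.castSucc)) ∧
          Nonempty (↥(K (Fin.last l)) ≃* R)) :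
    Monoid.exponent (Subgroup.center R) = p ^ e := by
  haveI : Fact p.Prime := ⟨hp⟩
  haveI : Finite (MulAut R) :=
    Finite.of_injective (fun f => (f : R → R)) DFunLike.coe_injective
  set A := Nat.card (MulAut R) with hA
  have hA1 : 1 ≤ A := Nat.card_pos
  obtain ⟨G, _, _, hpG, K, hK0, hstep, ⟨φ⟩⟩ := h A hA1
  set KK : ℕ → Subgroup G := fun j => if hj : j ≤ A then K ⟨j, by omega⟩ else ⊥ with hKKdef
  have hKK : ∀ (j : ℕ) (hj : j ≤ A), KK j = K ⟨j, by omega⟩ := fun j hj => dif_pos hj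
  have hKK0 : KK 0 = ⊤ := by rw [hKK 0 (by omega)]; exact hK0
  have hKKlast : KK A = K (Fin.last A) := hKK A le_rfl
  have hchain : ∀ j, j < A →
      IsGKType p ↥(KK j) ∧ ((KK (j + 1) : Set G) = kappaSet (KK j)) := by
    intro j hj
    have h1 := hstep ⟨j, hj⟩
    rw [hKK j (by omega), hKK (j + 1) (by omega)]
    exact h1
  -- exponents of the layers
  have hexpKK : ∀ d : ℕ, d ≤ A → Monoid.exponent ↥(KK (A - d)) = p ^ (e + d) := by
    intro d
    induction d with
    | zero =>
      intro _
      rw [Nat.sub_zero, hKKlast, Monoid.exponent_eq_of_mulEquiv φ, hexp, Nat.add_zero]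
    | succ d ih =>
      intro hd
      have hlt : A - (d + 1) < A := by omega
      set j := A - (d + 1) with hjdef
      have hj1 : j + 1 = A - d := by omega
      obtain ⟨hGK, hset⟩ := hchain j hlt
      have hIH := ih (by omega)
      rw [← hj1] at hIH
      obtain ⟨hfin, hnt, hpKKj, -⟩ := hGK
      haveI := hnt
      obtain ⟨y₀, hy₀⟩ := pgroup_exists_orderOf_eq_exponent hp hpKKj
      obtain ⟨f, hf⟩ := (IsPGroup.iff_orderOf.mp hpKKj) y₀
      have hef : Monoid.exponent ↥(KK j) = p ^ f := by rw [← hy₀, hf]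
      have hf1 : 1 ≤ f := by
        by_contra h0
        have hf0 : f = 0 := by omega
        have := Monoid.one_lt_exponent (G := ↥(KK j))
        rw [hef, hf0, pow_zero] at this
        omega
      have hyG : orderOf ((y₀ : G)) = p ^ f := by rw [Subgroup.orderOf_coe, hf]
      have hgcd1 : Nat.gcd (p ^ f) p = p := by
        rw [Nat.gcd_comm]
        exact Nat.gcd_eq_left (dvd_pow_self p (by omega))
      have hypow : orderOf ((y₀ : G) ^ p) = p ^ (f - 1) := by
        rw [orderOf_pow, hyG, hgcd1]
        rw [show p ^ f / p = p ^ f / p ^ 1 by rw [pow_one]]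
        exact Nat.pow_div (by omega) hp.pos
      have hypmem : (y₀ : G) ^ p ∈ KK (j + 1) := by
        rw [← SetLike.mem_coe, hset]
        refine ⟨Subgroup.pow_mem _ y₀.2 p, ?_⟩
        rw [hypow, hef]
        exact Nat.pow_lt_pow_right hp.one_lt (by omega)
      have hdvd1 : p ^ (f - 1) ∣ p ^ (e + d) := by
        rw [← hypow, ← hIH]
        have h2 := Monoid.order_dvd_exponent (⟨(y₀ : G) ^ p, hypmem⟩ : ↥(KK (j + 1)))
        rwa [Subgroup.orderOf_mk] at h2
      have hfle : f - 1 ≤ e + d := by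
        have := Nat.le_of_dvd (pow_pos hp.pos _) hdvd1
        exact (Nat.pow_le_pow_iff_right hp.one_lt).mp this
      obtain ⟨t₀, ht₀⟩ :=
        pgroup_exists_orderOf_eq_exponent hp (hpG.to_subgroup (KK (j + 1)))
      rw [hIH] at ht₀
      have htlt : p ^ (e + d) < p ^ f := by
        have hm : (t₀ : G) ∈ kappaSet (KK j) := by rw [← hset]; exact t₀.2
        have h2 := hm.2
        rw [hef, Subgroup.orderOf_coe, ht₀] at h2
        exact h2
      have hfeq : f = e + (d + 1) := by
        have := (Nat.pow_lt_pow_iff_right hp.one_lt).mp htlt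
        omega
      rw [hef, hfeq]
  -- element of maximal order
  have hexp0 : Monoid.exponent ↥(KK 0) = p ^ (e + A) := by
    have h2 := hexpKK A le_rfl
    rwa [Nat.sub_self] at h2
  obtain ⟨g₀, hg₀⟩ := pgroup_exists_orderOf_eq_exponent hp (hpG.to_subgroup (KK 0))
  rw [hexp0] at hg₀
  have hg : orderOf ((g₀ : G)) = p ^ (e + A) := by rw [Subgroup.orderOf_coe, hg₀]
  set g : G := (g₀ : G) with hgdef
  -- normality of the layers
  have hnorm : ∀ (c : G) (j : ℕ), j ≤ A → ∀ x ∈ KK j, c * x * c⁻¹ ∈ KK j := by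
    intro c j
    induction j with
    | zero => intro _ x _; rw [hKK0]; exact Subgroup.mem_top _
    | succ j ih =>
      intro hj x hx
      have hj' : j < A := by omega
      rw [← SetLike.mem_coe, (hchain j hj').2] at hx ⊢
      obtain ⟨hx1, hx2⟩ := hx
      refine ⟨ih (by omega) x hx1, ?_⟩
      have horder : orderOf (c * x * c⁻¹) = orderOf x := by
        have h2 := orderOf_injective (MulAut.conj c).toMonoidHom
          (MulAut.conj c).injective x
        simpa using h2
      rw [horder]
      exact hx2
  -- powers of g descend the chain
  have hgpow : ∀ j : ℕ, j ≤ A → g ^ (p ^ j) ∈ KK j := by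
    intro j
    induction j with
    | zero => intro _; rw [hKK0]; exact Subgroup.mem_top _
    | succ j ih =>
      intro hj
      have hj' : j < A := by omega
      have hmem := ih (by omega)
      have hord : orderOf (g ^ (p ^ j)) = p ^ (e + A - j) := by
        rw [orderOf_pow, hg, Nat.gcd_comm, Nat.gcd_eq_left (pow_dvd_pow p (by omega))]
        exact Nat.pow_div (by omega) hp.pos
      have hgcd1 : Nat.gcd (p ^ (e + A - j)) p = p := by
        rw [Nat.gcd_comm]
        exact Nat.gcd_eq_left (dvd_pow_self p (by omega))
      have hordp : orderOf ((g ^ (p ^ j)) ^ p) = p ^ (e + A - j - 1) := by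
        rw [orderOf_pow, hord, hgcd1,
          show p ^ (e + A - j) / p = p ^ (e + A - j) / p ^ 1 by rw [pow_one]]
        exact Nat.pow_div (by omega) hp.pos
      have hmem2 : (g ^ (p ^ j)) ^ p ∈ KK (j + 1) := by
        rw [← SetLike.mem_coe, (hchain j hj').2]
        refine ⟨Subgroup.pow_mem _ hmem p, ?_⟩
        rw [hordp]
        have he := hexpKK (A - j) (by omega)
        rw [show A - (A - j) = j by omega] at he
        rw [he]
        exact Nat.pow_lt_pow_right hp.one_lt (by omega)
      rw [← pow_mul, ← pow_succ] at hmem2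
      exact hmem2
  -- conjugation automorphism on the last layer
  haveI hNorm : (K (Fin.last A)).Normal := by
    constructor
    intro x hx c
    have h2 := hnorm c A le_rfl x (by rwa [hKKlast])
    rwa [hKKlast] at h2
  haveI : Finite (MulAut ↥(K (Fin.last A))) :=
    Finite.of_injective (fun f => (f : ↥(K (Fin.last A)) → ↥(K (Fin.last A))))
      DFunLike.coe_injective
  have hcardMA : Nat.card (MulAut ↥(K (Fin.last A))) = A := by
    apply Nat.card_congr
    refine ⟨fun f => (φ.symm.trans (f.trans φ)), fun f => (φ.trans (f.trans φ.symm)),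
      ?_, ?_⟩
    · intro f; ext x; simp
    · intro f; ext x; simp
  set β := (MulAut.conjNormal g : MulAut ↥(K (Fin.last A))) with hβdef
  have hβdvd : orderOf β ∣ p ^ (e + A) := by
    rw [← hg]
    exact orderOf_map_dvd _ g
  obtain ⟨s, hs, hβs⟩ := (Nat.dvd_prime_pow hp).mp hβdvd
  have hβcard : orderOf β ∣ A := by
    have h0 := orderOf_dvd_natCard β
    rwa [hcardMA] at h0
  have hβA : β ^ (p ^ A) = 1 := by
    apply orderOf_dvd_iff_pow_eq_one.mp
    rw [hβs]
    apply pow_dvd_pow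
    by_contra hcon
    push_neg at hcon
    have h1 : p ^ s ≤ A := by
      have h0 := hβcard
      rw [hβs] at h0
      exact Nat.le_of_dvd (by omega) h0
    have h2 : A < p ^ A := Nat.lt_pow_self hp.one_lt
    have h3 : p ^ A ≤ p ^ s := Nat.pow_le_pow_right hp.pos (le_of_lt hcon)
    omega
  -- the central element
  have hzmem : g ^ (p ^ A) ∈ K (Fin.last A) := by
    have h2 := hgpow A le_rfl
    rwa [hKKlast] at h2
  have hcomm : ∀ x : ↥(K (Fin.last A)), g ^ (p ^ A) * (x : G) * (g ^ (p ^ A))⁻¹ = x := by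
    intro x
    have h2 : MulAut.conjNormal (g ^ (p ^ A)) x = x := by
      rw [map_pow]
      rw [show (MulAut.conjNormal g : MulAut ↥(K (Fin.last A))) ^ (p ^ A) = 1 from hβA]
      rfl
    have h3 := congrArg Subtype.val h2
    rwa [MulAut.conjNormal_apply] at h3
  have hzord : orderOf (g ^ (p ^ A)) = p ^ e := by
    rw [orderOf_pow, hg, Nat.gcd_comm, Nat.gcd_eq_left (pow_dvd_pow p (by omega))]
    rw [Nat.pow_div (by omega) hp.pos]
    congr 1
    omega
  set zz : ↥(K (Fin.last A)) := ⟨g ^ (p ^ A), hzmem⟩ with hzzdef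
  have hzzord : orderOf zz = p ^ e := by rw [hzzdef, Subgroup.orderOf_mk, hzord]
  have hzzcomm : ∀ x : ↥(K (Fin.last A)), zz * x = x * zz := by
    intro x
    apply Subtype.ext
    have h2 := hcomm x
    rw [mul_inv_eq_iff_eq_mul] at h2
    exact h2
  have hword : orderOf (φ zz) = p ^ e := by
    rw [show φ zz = φ.toMonoidHom zz from rfl,
      orderOf_injective φ.toMonoidHom φ.injective zz, hzzord]
  have hwcen : φ zz ∈ Subgroup.center R := by
    rw [Subgroup.mem_center_iff]
    intro r
    calc r * φ zz = φ (φ.symm r) * φ zz := by rw [MulEquiv.apply_symm_apply]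
      _ = φ (φ.symm r * zz) := (map_mul _ _ _).symm
      _ = φ (zz * φ.symm r) := by rw [← hzzcomm (φ.symm r)]
      _ = φ zz * φ (φ.symm r) := map_mul _ _ _
      _ = φ zz * r := by rw [MulEquiv.apply_symm_apply]
  apply Nat.dvd_antisymm
  · apply Monoid.exponent_dvd_of_forall_pow_eq_one
    intro u
    apply Subtype.ext
    rw [SubgroupClass.coe_pow, ← hexp]
    rw [show ((1 : ↥(Subgroup.center R)) : R) = 1 from rfl]
    exact Monoid.pow_exponent_eq_one _
  · have h2 := Monoid.order_dvd_exponent (⟨φ zz, hwcen⟩ : ↥(Subgroup.center R))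
    rwa [Subgroup.orderOf_mk, hword] at h2

/-- The GK-tree with root `R` is infinite (i.e. `R` admits iterated GK-extensions
of arbitrary length) if and only if the center of `R` has exponent `p^e`. -/
theorem stmt3 (p n e : ℕ) (hp : p.Prime) (R : Type) [Group R] [Finite R]
    (hpR : IsPGroup p R) (hcard : Nat.card R = p ^ n)
    (hexp : Monoid.exponent R = p ^ e) (hnotGK : ¬ IsGKType p R) :
    (∀ l : ℕ, 1 ≤ l →
      ∃ (G : Type) (_ : Group G) (_ : Finite G), IsPGroup p G ∧
        ∃ K : Fin (l + 1) → Subgroup G,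
          K 0 = ⊤ ∧
          (∀ i : Fin l, IsGKType p ↥(K i.castSucc) ∧
            ((K i.succ : Subgroup G) : Set G) = kappaSet (K i.castSucc)) ∧
          Nonempty (↥(K (Fin.last l)) ≃* R)) ↔
    Monoid.exponent (Subgroup.center R) = p ^ e := by
  constructor
  · intro h
    exact forward_direction p e hp R hpR hexp h
  · intro hZ l hl
    exact backward_direction p n e hp R hpR hcard hexp hZ l hl
end

section
/- Let p be a prime and G a finite p-group. Suppose R is a regular subgroup of G, t ∈ Z(G) is a central element, and G is generated by {t} together with R. Then G is regular. -/
section Aux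

variable {G : Type*} [Group G]

open scoped commutatorElement

/-- Decomposition subgroup: elements of the form `t^k * m` with `m ∈ P`. -/
lemma central_mul_subgroup (t : G) (ht : ∀ g : G, Commute g t) (P : Subgroup G) :
    ∃ Q : Subgroup G, t ∈ Q ∧ P ≤ Q ∧ ∀ g ∈ Q, ∃ k : ℤ, ∃ m ∈ P, g = t ^ k * m := by
  refine ⟨{ carrier := {g | ∃ k : ℤ, ∃ m ∈ P, g = t ^ k * m}
            one_mem' := ⟨0, 1, P.one_mem, by simp⟩
            mul_mem' := ?_
            inv_mem' := ?_ }, ⟨1, 1, P.one_mem, by simp⟩,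
          fun m hm => ⟨0, m, hm, by simp⟩, fun g hg => hg⟩
  · rintro a b ⟨k, m, hm, rfl⟩ ⟨l, n, hn, rfl⟩
    refine ⟨k + l, m * n, mul_mem hm hn, ?_⟩
    have h : m * t ^ l = t ^ l * m := ((ht m).zpow_right l).eq
    rw [show t ^ k * m * (t ^ l * n) = t ^ k * (m * t ^ l) * n from by group, h, zpow_add]
    group
  · rintro a ⟨k, m, hm, rfl⟩
    refine ⟨-k, m⁻¹, inv_mem hm, ?_⟩
    have h : m⁻¹ * t ^ (-k) = t ^ (-k) * m⁻¹ := ((ht m⁻¹).zpow_right (-k)).eq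
    rw [mul_inv_rev, ← zpow_neg, h]

lemma comm_central_left {t : G} (ht : ∀ g : G, Commute g t) (k : ℤ) (m b : G) :
    ⁅t ^ k * m, b⁆ = ⁅m, b⁆ := by
  have h2 : t ^ k * (m * b * m⁻¹) = m * b * m⁻¹ * t ^ k := ((ht _).symm.zpow_left k).eq
  rw [commutatorElement_def, commutatorElement_def]
  calc t ^ k * m * b * (t ^ k * m)⁻¹ * b⁻¹
      = t ^ k * (m * b * m⁻¹) * (t ^ k)⁻¹ * b⁻¹ := by group
    _ = m * b * m⁻¹ * t ^ k * (t ^ k)⁻¹ * b⁻¹ := by rw [h2]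
    _ = m * b * m⁻¹ * b⁻¹ := by group

lemma comm_central_right {t : G} (ht : ∀ g : G, Commute g t) (l : ℤ) (m n : G) :
    ⁅m, t ^ l * n⁆ = ⁅m, n⁆ := by
  rw [← commutatorElement_inv, comm_central_left ht, commutatorElement_inv]

end Aux

/-- A finite `p`-group `G` is regular if for all `x, y ∈ G` there is
`c ∈ [H, H]`, where `H = ⟨x, y⟩`, with `x^p * y^p = (x*y)^p * c^p`. -/
def IsRegularPGroup (p : ℕ) (G : Type*) [Group G] : Prop :=
  ∀ x y : G,
    ∃ c ∈ ⁅Subgroup.closure ({x, y} : Set G), Subgroup.closure ({x, y} : Set G)⁆,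
      x ^ p * y ^ p = (x * y) ^ p * c ^ p

/-- If a finite `p`-group `G` is generated by a regular subgroup `R` together
with a central element `t`, then `G` is regular. -/
theorem stmt5 (p : ℕ) (hp : p.Prime) (G : Type*) [Group G] [Finite G]
    (hG : IsPGroup p G) (R : Subgroup G) (hR : IsRegularPGroup p ↥R)
    (t : G) (ht : t ∈ Subgroup.center G)
    (hgen : Subgroup.closure ({t} ∪ (R : Set G)) = ⊤) :
    IsRegularPGroup p G := by
  have htc : ∀ g : G, Commute g t := fun g => Subgroup.mem_center_iff.mp ht g
  intro x y
  -- decompose x and y as t^k * (element of R)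
  obtain ⟨Q, htQ, hRQ, hQ⟩ := central_mul_subgroup t htc R
  have hdec : ∀ g : G, ∃ k : ℤ, ∃ m ∈ R, g = t ^ k * m := by
    intro g
    have : g ∈ Subgroup.closure ({t} ∪ (R : Set G)) := by rw [hgen]; trivial
    refine hQ g ((Subgroup.closure_le Q).mpr ?_ this)
    rintro u (rfl | hu)
    · exact htQ
    · exact hRQ hu
  obtain ⟨a, r, hr, hx⟩ := hdec x
  obtain ⟨b, s, hs, hy⟩ := hdec y
  -- regularity in R
  obtain ⟨c, hc_mem, hc_eq⟩ := hR ⟨r, hr⟩ ⟨s, hs⟩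
  -- push the equation to G
  have key : r ^ p * s ^ p = (r * s) ^ p * (c : G) ^ p := by
    have := congrArg (Subgroup.subtype R) hc_eq
    push_cast at this
    simpa using this
  refine ⟨(c : G), ?_, ?_⟩
  · -- membership: (c : G) ∈ ⁅closure {x, y}, closure {x, y}⁆
    set H := Subgroup.closure ({x, y} : Set G)
    have hcK : (c : G) ∈ ⁅Subgroup.closure ({r, s} : Set G),
        Subgroup.closure ({r, s} : Set G)⁆ := by
      have : (c : G) ∈ Subgroup.map R.subtype
          ⁅Subgroup.closure ({(⟨r, hr⟩ : R), ⟨s, hs⟩} : Set R),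
           Subgroup.closure ({(⟨r, hr⟩ : R), ⟨s, hs⟩} : Set R)⁆ :=
        ⟨c, hc_mem, rfl⟩
      rw [Subgroup.map_commutator, MonoidHom.map_closure] at this
      simpa [Set.image_insert_eq] using this
    -- closure {r, s} maps into commutator of H via decomposition
    obtain ⟨QH, htQH, hHQH, hQH⟩ := central_mul_subgroup t htc H
    have hxH : x ∈ H := Subgroup.subset_closure (by simp)
    have hyH : y ∈ H := Subgroup.subset_closure (by simp)
    have hrQ : r ∈ QH := by
      have hre : r = t ^ (-a) * x := by rw [hx]; group
      rw [hre]
      exact QH.mul_mem (QH.zpow_mem htQH _) (hHQH hxH)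
    have hsQ : s ∈ QH := by
      have hse : s = t ^ (-b) * y := by rw [hy]; group
      rw [hse]
      exact QH.mul_mem (QH.zpow_mem htQH _) (hHQH hyH)
    have hKQ : Subgroup.closure ({r, s} : Set G) ≤ QH :=
      (Subgroup.closure_le QH).mpr (by rintro u (rfl | rfl) <;> assumption)
    have hle : ⁅Subgroup.closure ({r, s} : Set G), Subgroup.closure ({r, s} : Set G)⁆
        ≤ ⁅H, H⁆ := by
      rw [Subgroup.commutator_le]
      intro g1 hg1 g2 hg2
      obtain ⟨k, m, hm, rfl⟩ := hQH _ (hKQ hg1)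
      obtain ⟨l, n, hn, rfl⟩ := hQH _ (hKQ hg2)
      rw [comm_central_left htc, comm_central_right htc]
      exact Subgroup.commutator_mem_commutator hm hn
    exact hle hcK
  · -- the power equation
    have hu : ∀ g : G, Commute (t ^ a) g := fun g => (htc g).symm.zpow_left a
    have hv : ∀ g : G, Commute (t ^ b) g := fun g => (htc g).symm.zpow_left b
    rw [hx, hy]
    have e1 : (t ^ a * r) ^ p = (t ^ a) ^ p * r ^ p := (hu r).mul_pow p
    have e2 : (t ^ b * s) ^ p = (t ^ b) ^ p * s ^ p := (hv s).mul_pow p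
    have e3 : t ^ a * r * (t ^ b * s) = t ^ a * t ^ b * (r * s) := by
      have h := ((hv r).symm).eq
      rw [show t ^ a * r * (t ^ b * s) = t ^ a * (r * t ^ b) * s from by group, h]
      group
    have e4 : (t ^ a * t ^ b * (r * s)) ^ p = (t ^ a) ^ p * (t ^ b) ^ p * (r * s) ^ p := by
      have c1 : Commute (t ^ a * t ^ b) (r * s) := ((hu (r*s)).mul_left (hv (r*s)))
      rw [c1.mul_pow, (hu (t ^ b)).mul_pow]
    have e5 : (t ^ b) ^ p * r ^ p = r ^ p * (t ^ b) ^ p := ((hv (r ^ p)).pow_left p).eq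
    calc (t ^ a * r) ^ p * (t ^ b * s) ^ p
        = (t ^ a) ^ p * r ^ p * ((t ^ b) ^ p * s ^ p) := by rw [e1, e2]
      _ = (t ^ a) ^ p * (r ^ p * (t ^ b) ^ p) * s ^ p := by group
      _ = (t ^ a) ^ p * ((t ^ b) ^ p * r ^ p) * s ^ p := by rw [e5]
      _ = (t ^ a) ^ p * (t ^ b) ^ p * (r ^ p * s ^ p) := by group
      _ = (t ^ a) ^ p * (t ^ b) ^ p * ((r * s) ^ p * (c : G) ^ p) := by rw [key]
      _ = (t ^ a) ^ p * (t ^ b) ^ p * (r * s) ^ p * (c : G) ^ p := by group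
      _ = (t ^ a * r * (t ^ b * s)) ^ p * (c : G) ^ p := by rw [e3, e4]
end

section
/- Fix an integer e ≥ 2. A positive integer M can be written as M = 2^e·h + ∑_{i=1}^{e−1} m_i (2^{e−1} − 2^{e−1−i}) with nonnegative integers h, m_1, …, m_{e−1} if and only if the following holds: writing M uniquely as M = ∑_{i=0}^{e−1} a_i 2^i with a_i ∈ {0,1} for 0 ≤ i ≤ e−2 and a_{e−1} a nonnegative integer, and letting i₀ be the least index with a_{i₀} ≠ 0, one has ∑_{i=0}^{e−1} a_i ≥ e − 1 − i₀. -/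
/-! Auxiliary: binary digit sum (popcount). -/

def s : ℕ → ℕ
  | 0 => 0
  | n + 1 => s ((n + 1) / 2) + (n + 1) % 2
  decreasing_by exact Nat.div_lt_self (Nat.succ_pos n) one_lt_two

lemma s0 : s 0 = 0 := by simp [s]

lemma srec (n : ℕ) : s n = s (n / 2) + n % 2 := by
  cases n with
  | zero => simp [s]
  | succ m => rw [s]

lemma s1 : s 1 = 1 := by rw [srec]; simp [s0]

/-- disjoint additivity -/
lemma sD : ∀ (c m v : ℕ), v < 2 ^ c → s (2 ^ c * m + v) = s m + s v := by
  intro c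
  induction c with
  | zero => intro m v hv; interval_cases v; simp [s0]
  | succ c ih =>
    intro m v hv
    have hp : 2 ^ (c + 1) = 2 * 2 ^ c := by ring
    have h2 : 2 ^ (c + 1) * m + v = 2 * (2 ^ c * m + v / 2) + v % 2 := by
      have := Nat.div_add_mod v 2
      have h3 : 2 ^ (c+1) * m = 2 * (2 ^ c * m) := by ring
      omega
    have hd : (2 ^ (c + 1) * m + v) / 2 = 2 ^ c * m + v / 2 := by omega
    have hm : (2 ^ (c + 1) * m + v) % 2 = v % 2 := by omega
    rw [srec (2 ^ (c+1) * m + v), hd, hm, ih m (v / 2) (by omega),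
      add_assoc, ← srec v]

lemma compP : ∀ (n x : ℕ), x < 2 ^ n → s x + s (2 ^ n - 1 - x) = n := by
  intro n
  induction n with
  | zero => intro x hx; interval_cases x; simp [s0]
  | succ n ih =>
    intro x hx
    have hp : 2 ^ (n + 1) = 2 * 2 ^ n := by ring
    have hd : x / 2 < 2 ^ n := by omega
    have hb : x % 2 < 2 := Nat.mod_lt _ (by norm_num)
    have hy : 2 ^ (n + 1) - 1 - x = 2 * (2 ^ n - 1 - x / 2) + (1 - x % 2) := by omega
    have hyd : (2 ^ (n + 1) - 1 - x) / 2 = 2 ^ n - 1 - x / 2 := by omega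
    have hym : (2 ^ (n + 1) - 1 - x) % 2 = 1 - x % 2 := by omega
    rw [srec x, srec (2 ^ (n+1) - 1 - x), hyd, hym]
    have := ih (x / 2) hd
    omega

lemma sO (n : ℕ) : s (2 ^ n - 1) = n := by
  have := compP n 0 (Nat.pow_pos (by norm_num))
  simpa [s0] using this

lemma spow (n : ℕ) : s (2 ^ n) = 1 := by
  have := sD n 1 0 (Nat.pow_pos (by norm_num))
  simpa [s0, s1] using this

lemma ssucc : ∀ b, s (b + 1) ≤ s b + 1 := by
  intro b
  induction b using Nat.strong_induction_on with
  | _ b ih =>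
    rcases Nat.even_or_odd b with ⟨m, hm⟩ | ⟨m, hm⟩
    · have h1 : (b + 1) / 2 = m := by omega
      have h2 : (b + 1) % 2 = 1 := by omega
      have h3 : b / 2 = m := by omega
      have h4 : b % 2 = 0 := by omega
      rw [srec (b+1), srec b, h1, h2, h3, h4]
    · rcases Nat.eq_zero_or_pos b with rfl | hb
      · omega
      have h1 : (b + 1) / 2 = m + 1 := by omega
      have h2 : (b + 1) % 2 = 0 := by omega
      have h3 : b / 2 = m := by omega
      have h4 : b % 2 = 1 := by omega
      have := ih m (by omega)
      rw [srec (b+1), srec b, h1, h2, h3, h4]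
      omega

lemma spadd : ∀ (c b : ℕ), s (b + 2 ^ c) ≤ s b + 1 := by
  intro c
  induction c with
  | zero => intro b; exact ssucc b
  | succ c ih =>
    intro b
    have hp : 2 ^ (c + 1) = 2 * 2 ^ c := by ring
    have h1 : (b + 2 ^ (c + 1)) / 2 = b / 2 + 2 ^ c := by omega
    have h2 : (b + 2 ^ (c + 1)) % 2 = b % 2 := by omega
    rw [srec (b + 2 ^ (c+1)), srec b, h1, h2]
    have := ih (b / 2)
    omega

lemma geom : ∀ n : ℕ, (∑ i ∈ Finset.range n, 2 ^ i) + 1 = 2 ^ n := by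
  intro n
  induction n with
  | zero => simp
  | succ n ih => rw [Finset.sum_range_succ]; have : 2^(n+1) = 2*2^n := by ring
                 omega

lemma L1 : ∀ (n X : ℕ), X % 2 ^ n = ∑ i ∈ Finset.range n, (X / 2 ^ i % 2) * 2 ^ i := by
  intro n
  induction n with
  | zero => intro X; simp [Nat.mod_one]
  | succ n ih =>
    intro X
    rw [Finset.sum_range_succ, ← ih X]
    have h1 : X / 2 ^ n % 2 = X % 2 ^ (n+1) / 2 ^ n := by
      rw [← Nat.mod_mul_right_div_self, pow_succ]
    have h2 : X % 2 ^ (n + 1) % 2 ^ n = X % 2 ^ n :=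
      Nat.mod_mod_of_dvd X (pow_dvd_pow 2 (by omega))
    have h3 := Nat.div_add_mod (X % 2 ^ (n+1)) (2 ^ n)
    have h4 : X % 2 ^ (n+1) / 2 ^ n ≤ 1 := by
      have hlt : X % 2 ^ (n+1) < 2 ^ (n+1) := Nat.mod_lt _ (by positivity)
      have : 2 ^ (n+1) = 2 * 2 ^ n := by ring
      omega
    rw [h1]
    rcases Nat.le_one_iff_eq_zero_or_eq_one.mp h4 with h5 | h5 <;>
      rw [h5] at h3 ⊢ <;> omega

lemma L2 : ∀ (n X : ℕ), X < 2 ^ n → s X = ∑ i ∈ Finset.range n, X / 2 ^ i % 2 := by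
  intro n
  induction n with
  | zero => intro X hX; interval_cases X; simp [s0]
  | succ n ih =>
    intro X hX
    rw [Finset.sum_range_succ']
    have hterm : ∀ i, X / 2 ^ (i + 1) % 2 = (X / 2) / 2 ^ i % 2 := by
      intro i
      rw [Nat.div_div_eq_div_mul, ← pow_succ']
    simp only [hterm, pow_zero, Nat.div_one]
    have hp : 2 ^ (n + 1) = 2 * 2 ^ n := by ring
    rw [← ih (X / 2) (by omega), ← srec]

lemma sumlt (n : ℕ) (a : ℕ → ℕ) (hle : ∀ i, i < n → a i ≤ 1) :
    (∑ i ∈ Finset.range n, a i * 2 ^ i) < 2 ^ n := by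
  have h1 : (∑ i ∈ Finset.range n, a i * 2 ^ i) ≤ ∑ i ∈ Finset.range n, 2 ^ i := by
    apply Finset.sum_le_sum
    intro i hi
    have := hle i (Finset.mem_range.mp hi)
    calc a i * 2 ^ i ≤ 1 * 2 ^ i := Nat.mul_le_mul_right _ this
      _ = 2 ^ i := one_mul _
  have := geom n
  omega

lemma L4 : ∀ (n : ℕ) (a : ℕ → ℕ), (∀ i, i < n → a i ≤ 1) →
    s (∑ i ∈ Finset.range n, a i * 2 ^ i) = ∑ i ∈ Finset.range n, a i := by
  intro n
  induction n with
  | zero => intro a _; simp [s0]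
  | succ n ih =>
    intro a hle
    rw [Finset.sum_range_succ, Finset.sum_range_succ]
    have hlow : (∑ i ∈ Finset.range n, a i * 2 ^ i) < 2 ^ n :=
      sumlt n a (fun i hi => hle i (by omega))
    have : (∑ i ∈ Finset.range n, a i * 2 ^ i) + a n * 2 ^ n
        = 2 ^ n * a n + (∑ i ∈ Finset.range n, a i * 2 ^ i) := by ring
    rw [this, sD n (a n) _ hlow, ih a (fun i hi => hle i (by omega))]
    have han : a n ≤ 1 := hle n (by omega)
    rcases Nat.le_one_iff_eq_zero_or_eq_one.mp han with h | h <;> rw [h]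
    · simp [s0]
    · simp [s1]; omega

noncomputable def fpot (E X : ℕ) : ℕ := 2 * (X / 2 ^ E) + s (X % 2 ^ E)

lemma fpot0 (E : ℕ) : fpot E 0 = 0 := by simp [fpot, s0]

lemma fstep (E c X : ℕ) (hc : c < E) : fpot E (X + 2 ^ c) ≤ fpot E X + 1 := by
  have hA0 : (0:ℕ) < 2 ^ E := by positivity
  have hcA : 2 ^ c < 2 ^ E := Nat.pow_lt_pow_right (by norm_num) hc
  have hX : X % 2 ^ E + X / 2 ^ E * 2 ^ E = X := by
    rw [mul_comm]; exact Nat.mod_add_div X (2^E)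
  have hbA : X % 2 ^ E < 2 ^ E := Nat.mod_lt _ hA0
  by_cases hbc : X % 2 ^ E + 2 ^ c < 2 ^ E
  · have hform : X + 2 ^ c = (X % 2 ^ E + 2 ^ c) + X / 2 ^ E * 2 ^ E := by omega
    have hdiv : (X + 2 ^ c) / 2 ^ E = X / 2 ^ E := by
      rw [hform, Nat.add_mul_div_right _ _ hA0, Nat.div_eq_of_lt hbc, zero_add]
    have hmod : (X + 2 ^ c) % 2 ^ E = X % 2 ^ E + 2 ^ c := by
      rw [hform, Nat.add_mul_mod_self_right, Nat.mod_eq_of_lt hbc]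
    simp only [fpot]
    rw [hdiv, hmod]
    have := spadd c (X % 2 ^ E)
    omega
  · have huc : X % 2 ^ E + 2 ^ c - 2 ^ E < 2 ^ c := by omega
    have hform : X + 2 ^ c = (X % 2 ^ E + 2 ^ c - 2 ^ E) + (X / 2 ^ E + 1) * 2 ^ E := by
      have hmul : (X / 2 ^ E + 1) * 2 ^ E = X / 2 ^ E * 2 ^ E + 2 ^ E := by ring
      omega
    have hdiv : (X + 2 ^ c) / 2 ^ E = X / 2 ^ E + 1 := by
      rw [hform, Nat.add_mul_div_right _ _ hA0, Nat.div_eq_of_lt (by omega), zero_add]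
    have hmod : (X + 2 ^ c) % 2 ^ E = X % 2 ^ E + 2 ^ c - 2 ^ E := by
      rw [hform, Nat.add_mul_mod_self_right, Nat.mod_eq_of_lt (by omega)]
    have hbform : X % 2 ^ E = 2 ^ c * (2 ^ (E - c) - 1) + (X % 2 ^ E + 2 ^ c - 2 ^ E) := by
      have h2 : 2 ^ c * (2 ^ (E - c) - 1) + 2 ^ c = 2 ^ E := by
        have h3 : 2 ^ c * (2 ^ (E - c) - 1) + 2 ^ c * 1 = 2 ^ c * 2 ^ (E - c) := by
          rw [← Nat.mul_add]
          congr 1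
          have : 1 ≤ 2 ^ (E - c) := Nat.one_le_two_pow
          omega
        have h1 : 2 ^ c * 2 ^ (E - c) = 2 ^ E := by
          rw [← pow_add]; congr 1; omega
        omega
      omega
    have hsb : s (X % 2 ^ E) = (E - c) + s (X % 2 ^ E + 2 ^ c - 2 ^ E) := by
      conv_lhs => rw [hbform]
      rw [sD _ _ _ huc, sO]
    simp only [fpot]
    rw [hdiv, hmod, hsb]
    have hEc : 1 ≤ E - c := by omega
    omega

lemma fstep_mul (E c X m : ℕ) (hc : c < E) : fpot E (X + m * 2 ^ c) ≤ fpot E X + m := by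
  induction m with
  | zero => simp
  | succ m ih =>
    have : X + (m + 1) * 2 ^ c = (X + m * 2 ^ c) + 2 ^ c := by ring
    rw [this]
    have := fstep E c (X + m * 2 ^ c) hc
    omega

lemma fsum (E : ℕ) (m : ℕ → ℕ) :
    ∀ (F : Finset ℕ), (∀ i ∈ F, E - i < E) → ∀ X,
    fpot E (X + ∑ i ∈ F, m i * 2 ^ (E - i)) ≤ fpot E X + ∑ i ∈ F, m i := by
  intro F
  induction F using Finset.induction_on with
  | empty => intro _ X; simp
  | insert _ _ ha ih =>
    rename_i j F'
    intro hmem X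
    rw [Finset.sum_insert ha, Finset.sum_insert ha]
    have h1 : X + (m j * 2 ^ (E - j) + ∑ i ∈ F', m i * 2 ^ (E - i))
        = (X + m j * 2 ^ (E - j)) + ∑ i ∈ F', m i * 2 ^ (E - i) := by ring
    rw [h1]
    have h2 := ih (fun i hi => hmem i (Finset.mem_insert_of_mem hi)) (X + m j * 2 ^ (E - j))
    have h3 := fstep_mul E (E - j) X (m j) (hmem j (Finset.mem_insert_self j F'))
    omega

lemma alg (E : ℕ) (a : ℕ → ℕ) :
    (∑ c ∈ Finset.range E, a c * (2 ^ E - 2 ^ c)) + (∑ c ∈ Finset.range E, a c * 2 ^ c)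
      = (∑ c ∈ Finset.range E, a c) * 2 ^ E := by
  rw [← Finset.sum_add_distrib, Finset.sum_mul]
  apply Finset.sum_congr rfl
  intro c hc
  have hcE : c < E := Finset.mem_range.mp hc
  have hle : 2 ^ c ≤ 2 ^ E := Nat.pow_le_pow_right (by norm_num) hcE.le
  rw [← Nat.mul_add, Nat.sub_add_cancel hle]

lemma gensum (E w : ℕ) (hw : w < 2 ^ E) :
    (∑ i ∈ Finset.Icc 1 E, (w / 2 ^ (E - i) % 2) * (2 ^ E - 2 ^ (E - i))) + w
      = s w * 2 ^ E := by
  have hre : (∑ i ∈ Finset.Icc 1 E, (w / 2 ^ (E - i) % 2) * (2 ^ E - 2 ^ (E - i)))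
      = ∑ c ∈ Finset.range E, (w / 2 ^ c % 2) * (2 ^ E - 2 ^ c) := by
    rw [← Finset.Ico_add_one_right_eq_Icc, Finset.sum_Ico_eq_sum_range]
    simp only [Nat.add_sub_cancel]
    rw [← Finset.sum_range_reflect (fun c => (w / 2 ^ c % 2) * (2 ^ E - 2 ^ c)) E]
    apply Finset.sum_congr rfl
    intro j hj
    have hj' : E - (1 + j) = E - 1 - j := by omega
    rw [hj']
  rw [hre]
  have hw2 : ∑ c ∈ Finset.range E, (w / 2 ^ c % 2) * 2 ^ c = w := by
    rw [← L1]; exact Nat.mod_eq_of_lt hw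
  have halg := alg E (fun c => w / 2 ^ c % 2)
  rw [hw2] at halg
  rw [L2 E w hw]
  exact halg

lemma BL (E i₀ : ℕ) (a : ℕ → ℕ) (hle : ∀ i, i < E → a i ≤ 1) (hiE : i₀ < E)
    (hai : a i₀ = 1) (hb : ∀ j, j < i₀ → a j = 0) :
    s ((2 ^ E - ∑ i ∈ Finset.range E, a i * 2 ^ i) % 2 ^ E)
      + (∑ i ∈ Finset.range E, a i) + i₀ = E + 1 := by
  set r := ∑ i ∈ Finset.range E, a i * 2 ^ i with hrdef
  have hrlt : r < 2 ^ E := sumlt E a hle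
  have hsplit : r = 2 ^ i₀ + ∑ i ∈ Finset.Ico (i₀+1) E, a i * 2 ^ i := by
    rw [hrdef, Finset.range_eq_Ico, ← Finset.sum_Ico_consecutive _ (Nat.zero_le i₀) hiE.le]
    have h1 : ∑ i ∈ Finset.Ico 0 i₀, a i * 2 ^ i = 0 :=
      Finset.sum_eq_zero (fun i hi => by rw [hb i (Finset.mem_Ico.mp hi).2]; ring)
    rw [h1, zero_add, Finset.sum_eq_sum_Ico_succ_bot hiE, hai, one_mul]
  obtain ⟨u, hu⟩ : 2 ^ (i₀+1) ∣ ∑ i ∈ Finset.Ico (i₀+1) E, a i * 2 ^ i :=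
    Finset.dvd_sum (fun i hi =>
      dvd_mul_of_dvd_right (pow_dvd_pow 2 (Finset.mem_Ico.mp hi).1) (a i))
  have hr2 : r = 2 ^ (i₀+1) * u + 2 ^ i₀ := by rw [hsplit, hu]; ring
  have h2i : 2 ^ i₀ < 2 ^ (i₀+1) := by
    have h : 2 ^ (i₀+1) = 2 * 2 ^ i₀ := by ring
    have : (0:ℕ) < 2 ^ i₀ := by positivity
    omega
  have hsr : s r = s u + 1 := by rw [hr2, sD _ _ _ h2i, spow]
  have hione : (1:ℕ) ≤ 2 ^ i₀ := Nat.one_le_two_pow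
  have hr1 : r - 1 = 2 ^ (i₀+1) * u + (2 ^ i₀ - 1) := by omega
  have hsr1 : s (r - 1) = s u + i₀ := by rw [hr1, sD _ _ _ (by omega), sO]
  have hcomp := compP E (r - 1) (by omega)
  have hwe : 2 ^ E - 1 - (r - 1) = 2 ^ E - r := by omega
  rw [hwe] at hcomp
  have hmod : (2 ^ E - r) % 2 ^ E = 2 ^ E - r := Nat.mod_eq_of_lt (by omega)
  have hL4 : s r = ∑ i ∈ Finset.range E, a i := L4 E a hle
  rw [hmod]
  omega

/-- `M` is a solution of the diophantine equation
`M = 2^e·h + ∑_{i=1}^{e-1} m_i (2^{e-1} - 2^{e-1-i})` with `h, m_i ≥ 0`. -/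
def Rep2 (e M : ℕ) : Prop :=
  ∃ (h : ℕ) (m : ℕ → ℕ),
    M = 2 ^ e * h + ∑ i ∈ Finset.Icc 1 (e - 1), m i * (2 ^ (e - 1) - 2 ^ (e - 1 - i))

lemma key (E M : ℕ) (hE : 1 ≤ E) :
    Rep2 (E + 1) M ↔ s ((2 ^ E - M % 2 ^ E) % 2 ^ E) ≤ M / 2 ^ E + 1 := by
  have hA0 : (0:ℕ) < 2 ^ E := by positivity
  have hqM : 2 ^ E * (M / 2 ^ E) + M % 2 ^ E = M := Nat.div_add_mod M (2 ^ E)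
  have hrlt : M % 2 ^ E < 2 ^ E := Nat.mod_lt _ hA0
  constructor
  · intro H
    obtain ⟨h, m, hrep⟩ := H
    simp only [Nat.add_sub_cancel] at hrep
    have hMP : M + (∑ i ∈ Finset.Icc 1 E, m i * 2 ^ (E - i))
        = 2 ^ (E+1) * h + (∑ i ∈ Finset.Icc 1 E, m i) * 2 ^ E := by
      rw [hrep, add_assoc, ← Finset.sum_add_distrib, Finset.sum_mul]
      congr 1
      apply Finset.sum_congr rfl
      intro i _
      have hle : 2 ^ (E - i) ≤ 2 ^ E := Nat.pow_le_pow_right (by norm_num) (by omega)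
      rw [← Nat.mul_add, Nat.sub_add_cancel hle]
    have fb : fpot E (∑ i ∈ Finset.Icc 1 E, m i * 2 ^ (E - i))
        ≤ ∑ i ∈ Finset.Icc 1 E, m i := by
      have := fsum E m (Finset.Icc 1 E)
        (fun i hi => by have := Finset.mem_Icc.mp hi; omega) 0
      simpa [fpot0] using this
    by_cases hr : M % 2 ^ E = 0
    · rw [hr, Nat.sub_zero, Nat.mod_self, s0]; exact Nat.zero_le _
    · have hw : (2 ^ E - M % 2 ^ E) % 2 ^ E = 2 ^ E - M % 2 ^ E :=
        Nat.mod_eq_of_lt (by omega)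
      rw [hw]
      have hT : M + (∑ i ∈ Finset.Icc 1 E, m i * 2 ^ (E - i))
          = (2 * h + ∑ i ∈ Finset.Icc 1 E, m i) * 2 ^ E := by
        rw [hMP, pow_succ]; ring
      have hq1 : M / 2 ^ E < 2 * h + ∑ i ∈ Finset.Icc 1 E, m i := by
        have h1 : 2 ^ E * (M / 2 ^ E)
            < 2 ^ E * (2 * h + ∑ i ∈ Finset.Icc 1 E, m i) := by
          have : (2 * h + ∑ i ∈ Finset.Icc 1 E, m i) * 2 ^ E
              = 2 ^ E * (2 * h + ∑ i ∈ Finset.Icc 1 E, m i) := by ring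
          omega
        exact Nat.lt_of_mul_lt_mul_left h1
      obtain ⟨j, hj⟩ : ∃ j, 2 * h + (∑ i ∈ Finset.Icc 1 E, m i) = M / 2 ^ E + 1 + j :=
        ⟨2 * h + (∑ i ∈ Finset.Icc 1 E, m i) - (M / 2 ^ E + 1), by omega⟩
      rw [hj] at hT
      have hPwj : (∑ i ∈ Finset.Icc 1 E, m i * 2 ^ (E - i))
          = (2 ^ E - M % 2 ^ E) + j * 2 ^ E := by
        have h2 : (M / 2 ^ E + 1 + j) * 2 ^ E
            = 2 ^ E * (M / 2 ^ E) + 2 ^ E + j * 2 ^ E := by ring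
        omega
      have hPd : (∑ i ∈ Finset.Icc 1 E, m i * 2 ^ (E - i)) / 2 ^ E = j := by
        rw [hPwj, Nat.add_mul_div_right _ _ hA0, Nat.div_eq_of_lt (by omega), zero_add]
      have hPm : (∑ i ∈ Finset.Icc 1 E, m i * 2 ^ (E - i)) % 2 ^ E
          = 2 ^ E - M % 2 ^ E := by
        rw [hPwj, Nat.add_mul_mod_self_right, Nat.mod_eq_of_lt (by omega)]
      have hfP : fpot E (∑ i ∈ Finset.Icc 1 E, m i * 2 ^ (E - i))
          = 2 * j + s (2 ^ E - M % 2 ^ E) := by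
        simp only [fpot, hPd, hPm]
      omega
  · intro hs
    by_cases hr : M % 2 ^ E = 0
    · have hM2 : M = 2 ^ E * (M / 2 ^ E) := by omega
      rcases Nat.even_or_odd (M / 2 ^ E) with ⟨h, hh⟩ | ⟨h, hh⟩
      · refine ⟨h, fun _ => 0, ?_⟩
        simp only [zero_mul, Finset.sum_const_zero, add_zero]
        rw [hM2, hh, pow_succ]; ring
      · refine ⟨h, fun i => if i = 1 then 2 else 0, ?_⟩
        simp only [Nat.add_sub_cancel]
        rw [Finset.sum_eq_single 1 (fun b _ hb => by simp [hb])
          (fun habs => absurd (Finset.mem_Icc.mpr ⟨le_refl 1, hE⟩) habs)]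
        rw [if_pos rfl]
        have hE1 : 2 ^ E = 2 * 2 ^ (E-1) := by
          rw [← pow_succ']; congr 1; omega
        have hM3 : M = 2 ^ E * (2 * h) + 2 ^ E := by rw [hM2, hh]; ring
        have h2 : 2 ^ (E+1) * h = 2 ^ E * (2 * h) := by rw [pow_succ]; ring
        omega
    · have hwlt : 2 ^ E - M % 2 ^ E < 2 ^ E := by omega
      rw [Nat.mod_eq_of_lt hwlt] at hs
      have hg := gensum E (2 ^ E - M % 2 ^ E) hwlt
      have hMw : M + (2 ^ E - M % 2 ^ E) = 2 ^ E * (M / 2 ^ E) + 2 ^ E := by omega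
      rcases Nat.even_or_odd (M / 2 ^ E + 1 - s (2 ^ E - M % 2 ^ E)) with ⟨h, hh⟩ | ⟨h, hh⟩
      · refine ⟨h, fun i => (2 ^ E - M % 2 ^ E) / 2 ^ (E - i) % 2, ?_⟩
        simp only [Nat.add_sub_cancel]
        have h3 : M / 2 ^ E + 1 = s (2 ^ E - M % 2 ^ E) + 2 * h := by omega
        have hx : 2 ^ E * (M / 2 ^ E) + 2 ^ E
            = s (2 ^ E - M % 2 ^ E) * 2 ^ E + 2 ^ (E+1) * h := by
          have h4 : 2 ^ E * (M / 2 ^ E) + 2 ^ E = 2 ^ E * (M / 2 ^ E + 1) := by ring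
          rw [h4, h3, pow_succ]; ring
        omega
      · have h3 : M / 2 ^ E = s (2 ^ E - M % 2 ^ E) + 2 * h := by omega
        refine ⟨h, fun i => (if i = 1 then 2 else 0)
          + (2 ^ E - M % 2 ^ E) / 2 ^ (E - i) % 2, ?_⟩
        simp only [Nat.add_sub_cancel, add_mul]
        rw [Finset.sum_add_distrib]
        rw [Finset.sum_eq_single 1 (fun b _ hb => by simp [hb])
          (fun habs => absurd (Finset.mem_Icc.mpr ⟨le_refl 1, hE⟩) habs)]
        rw [if_pos rfl]
        have hE1 : 2 ^ E = 2 * 2 ^ (E-1) := by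
          rw [← pow_succ']; congr 1; omega
        have h21 : 2 * (2 ^ E - 2 ^ (E - 1)) = 2 ^ E := by omega
        have hx : 2 ^ E * (M / 2 ^ E) = s (2 ^ E - M % 2 ^ E) * 2 ^ E + 2 ^ (E+1) * h := by
          rw [h3, pow_succ]; ring
        omega

/-- Characterization of the solutions: writing `M = ∑_{i=0}^{e-1} a_i 2^i`
with `a_i ∈ {0,1}` for `i ≤ e-2` and `a_{e-1} ≥ 0`, and `i₀` the least index
with `a_{i₀} ≠ 0`, the number `M` is a solution iff `∑ a_i ≥ e - 1 - i₀`. -/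
theorem stmt6 (e : ℕ) (he : 2 ≤ e) (M : ℕ) (hM : 0 < M) :
    Rep2 e M ↔
      ∀ a : ℕ → ℕ, (∀ i, i ≤ e - 2 → a i ≤ 1) → (∀ i, e ≤ i → a i = 0) →
        M = ∑ i ∈ Finset.range e, a i * 2 ^ i →
        ∀ i₀ : ℕ, a i₀ ≠ 0 → (∀ j, j < i₀ → a j = 0) →
          e - 1 - i₀ ≤ ∑ i ∈ Finset.range e, a i := by
  obtain ⟨E, rfl⟩ : ∃ E, e = E + 1 := ⟨e - 1, by omega⟩
  have hE : 1 ≤ E := by omega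
  have hA0 : (0:ℕ) < 2 ^ E := by positivity
  rw [key E M hE]
  constructor
  · intro hs a ha1 ha0 hsum i₀ hi₀ hmin
    by_cases hiE : E ≤ i₀
    · have h0 : E + 1 - 1 - i₀ = 0 := by omega
      rw [h0]; exact Nat.zero_le _
    push_neg at hiE
    have hle : ∀ i, i < E → a i ≤ 1 := fun i hi => ha1 i (by omega)
    have hai : a i₀ = 1 := by have := ha1 i₀ (by omega); omega
    have hBL := BL E i₀ a hle hiE hai hmin
    have hsum' : M = (∑ i ∈ Finset.range E, a i * 2 ^ i) + a E * 2 ^ E := by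
      rw [hsum, Finset.sum_range_succ]
    have hlow : (∑ i ∈ Finset.range E, a i * 2 ^ i) < 2 ^ E := sumlt E a hle
    have hmod : M % 2 ^ E = ∑ i ∈ Finset.range E, a i * 2 ^ i := by
      rw [hsum', Nat.add_mul_mod_self_right, Nat.mod_eq_of_lt hlow]
    have hdiv : M / 2 ^ E = a E := by
      rw [hsum', Nat.add_mul_div_right _ _ hA0, Nat.div_eq_of_lt hlow, zero_add]
    rw [hmod, hdiv] at hs
    rw [Finset.sum_range_succ]
    omega
  · intro hcond
    by_cases hr : M % 2 ^ E = 0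
    · rw [hr, Nat.sub_zero, Nat.mod_self, s0]; exact Nat.zero_le _
    · have hL1 : M % 2 ^ E = ∑ i ∈ Finset.range E, (M / 2 ^ i % 2) * 2 ^ i := L1 E M
      have hex : ∃ i, i < E ∧ M / 2 ^ i % 2 = 1 := by
        by_contra hno
        push_neg at hno
        apply hr
        rw [hL1]
        apply Finset.sum_eq_zero
        intro i hi
        have hb : M / 2 ^ i % 2 < 2 := Nat.mod_lt _ (by norm_num)
        have := hno i (Finset.mem_range.mp hi)
        have hzz : M / 2 ^ i % 2 = 0 := by omega
        rw [hzz, zero_mul]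
      obtain ⟨iw, hiwE, hiwP⟩ := hex
      have hexP : ∃ i, M / 2 ^ i % 2 = 1 := ⟨iw, hiwP⟩
      set i₀ := Nat.find hexP with hi₀def
      have hi₀P : M / 2 ^ i₀ % 2 = 1 := Nat.find_spec hexP
      have hi₀E : i₀ < E := lt_of_le_of_lt (Nat.find_min' hexP hiwP) hiwE
      have hminb : ∀ j, j < i₀ → M / 2 ^ j % 2 = 0 := by
        intro j hj
        have h1 := Nat.find_min hexP hj
        have hb : M / 2 ^ j % 2 < 2 := Nat.mod_lt _ (by norm_num)
        omega
      set acan : ℕ → ℕ :=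
        fun i => if i < E then M / 2 ^ i % 2 else if i = E then M / 2 ^ E else 0
        with hacan
      have hacanlow : ∀ i, i < E → acan i = M / 2 ^ i % 2 := by
        intro i hi; simp [hacan, hi]
      have hlowsum : ∑ i ∈ Finset.range E, acan i * 2 ^ i = M % 2 ^ E := by
        rw [hL1]
        apply Finset.sum_congr rfl
        intro i hi
        rw [hacanlow i (Finset.mem_range.mp hi)]
      have hacanE : acan E = M / 2 ^ E := by simp [hacan]
      have hmc : 2 ^ E * (M / 2 ^ E) + M % 2 ^ E = M := Nat.div_add_mod M (2 ^ E)
      have happ := hcond acan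
        (fun i hi => by
          have hiE : i < E := by omega
          rw [hacanlow i hiE]
          have : M / 2 ^ i % 2 < 2 := Nat.mod_lt _ (by norm_num)
          omega)
        (fun i hi => by
          have h1 : ¬ (i < E) := by omega
          have h2 : ¬ (i = E) := by omega
          simp [hacan, h1, h2])
        (by
          rw [Finset.sum_range_succ, hlowsum, hacanE]
          have : M / 2 ^ E * 2 ^ E = 2 ^ E * (M / 2 ^ E) := by ring
          omega)
        i₀
        (by rw [hacanlow i₀ hi₀E, hi₀P]; omega)
        (fun j hj => by
          have hjE : j < E := by omega
          rw [hacanlow j hjE, hminb j hj])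
      have hle : ∀ i, i < E → acan i ≤ 1 := by
        intro i hi
        rw [hacanlow i hi]
        have : M / 2 ^ i % 2 < 2 := Nat.mod_lt _ (by norm_num)
        omega
      have hai : acan i₀ = 1 := by rw [hacanlow i₀ hi₀E, hi₀P]
      have hminc : ∀ j, j < i₀ → acan j = 0 := fun j hj => by
        have hjE : j < E := by omega
        rw [hacanlow j hjE, hminb j hj]
      have hBL := BL E i₀ acan hle hi₀E hai hminc
      rw [hlowsum] at hBL
      rw [Finset.sum_range_succ, hacanE] at happ
      omega
end

section
/- Fix an integer e ≥ 3. Every integer M ≥ (e−3)·2^{e−1} + 2 can be written as M = 2^e·h + ∑_{i=1}^{e−1} m_i (2^{e−1} − 2^{e−1−i}) with nonnegative integers h, m_1, …, m_{e−1}, while (e−3)·2^{e−1} + 1 cannot be so written. Hence the least stable solution δ_e(2) of this diophantine equation equals (e−3)·2^{e−1} + 2. -/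
/-- Binary digit sum. -/
def s2 : ℕ → ℕ
  | 0 => 0
  | (n+1) => (n+1) % 2 + s2 ((n+1)/2)
decreasing_by exact Nat.div_lt_self (Nat.succ_pos n) one_lt_two

lemma s2_zero : s2 0 = 0 := by rw [s2]

lemma s2_def (n : ℕ) : s2 n = n % 2 + s2 (n / 2) := by
  cases n with
  | zero => simp [s2_zero]
  | succ k => rw [s2]

lemma s2_mul_pow_add (c : ℕ) : ∀ x w : ℕ, w < 2 ^ c → s2 (2 ^ c * x + w) = s2 x + s2 w := by
  induction c with
  | zero =>
    intro x w hw
    interval_cases w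
    simp [s2_zero]
  | succ c ih =>
    intro x w hw
    have hp : (0:ℕ) < 2 ^ c := Nat.pow_pos (by norm_num)
    have h1 : 2 ^ (c+1) * x + w = 2 * (2 ^ c * x) + w := by ring
    have h2 : (2 * (2 ^ c * x) + w) % 2 = w % 2 := by omega
    have h3 : (2 * (2 ^ c * x) + w) / 2 = 2 ^ c * x + w / 2 := by omega
    have hw2 : w / 2 < 2 ^ c := by
      have : (2:ℕ) ^ (c+1) = 2 * 2 ^ c := by ring
      omega
    rw [s2_def (2 ^ (c+1) * x + w), h1, h2, h3, ih x (w/2) hw2, s2_def w]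
    omega

lemma s2_two_pow_sub_one (g : ℕ) : s2 (2 ^ g - 1) = g := by
  induction g with
  | zero => simp [s2_zero]
  | succ g ih =>
    have hp : (0:ℕ) < 2 ^ g := Nat.pow_pos (by norm_num)
    have h1 : (2:ℕ) ^ (g+1) = 2 * 2 ^ g := by ring
    have h2 : (2 ^ (g+1) - 1 : ℕ) % 2 = 1 := by omega
    have h3 : (2 ^ (g+1) - 1 : ℕ) / 2 = 2 ^ g - 1 := by omega
    rw [s2_def, h2, h3, ih]
    omega

lemma s2_succ_le (v : ℕ) : s2 (v + 1) ≤ s2 v + 1 := by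
  induction v using Nat.strong_induction_on with
  | _ v ih =>
    rcases Nat.even_or_odd v with he | ho
    · obtain ⟨u, rfl⟩ := he
      have h2 : (u + u + 1) % 2 = 1 := by omega
      have h3 : (u + u + 1) / 2 = (u + u) / 2 := by omega
      rw [s2_def (u + u + 1), h2, h3, s2_def (u + u)]
      omega
    · obtain ⟨u, rfl⟩ := ho
      have h2 : (2 * u + 1 + 1) % 2 = 0 := by omega
      have h3 : (2 * u + 1 + 1) / 2 = u + 1 := by omega
      have h4 : (2 * u + 1) % 2 = 1 := by omega
      have h5 : (2 * u + 1) / 2 = u := by omega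
      have hu : u < 2 * u + 1 := by omega
      have := ih u hu
      rw [s2_def (2 * u + 1 + 1), h2, h3, s2_def (2 * u + 1), h4, h5]
      omega

lemma s2_add_two_pow_le (c : ℕ) : ∀ v : ℕ, s2 (v + 2 ^ c) ≤ s2 v + 1 := by
  induction c with
  | zero => intro v; simpa using s2_succ_le v
  | succ c ih =>
    intro v
    have hp : (0:ℕ) < 2 ^ c := Nat.pow_pos (by norm_num)
    have h1 : v + 2 ^ (c+1) = v + 2 * 2 ^ c := by ring_nf
    have h2 : (v + 2 * 2 ^ c) % 2 = v % 2 := by omega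
    have h3 : (v + 2 * 2 ^ c) / 2 = v / 2 + 2 ^ c := by omega
    rw [h1, s2_def (v + 2 * 2 ^ c), h2, h3, s2_def v]
    have := ih (v / 2)
    omega

/-- The "minimum number of powers of two each at most `2^d` summing to `x`" lower bound. -/
def Fd (d x : ℕ) : ℕ := x / 2 ^ d + s2 (x % 2 ^ d)

lemma Fd_step (d c : ℕ) (hc : c ≤ d) (x : ℕ) : Fd d (x + 2 ^ c) ≤ Fd d x + 1 := by
  have hp : (0:ℕ) < 2 ^ d := Nat.pow_pos (by norm_num)
  have hv : x % 2 ^ d < 2 ^ d := Nat.mod_lt _ hp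
  rcases eq_or_lt_of_le hc with heq | hlt
  · rw [heq]
    have h1 : (x + 2 ^ d) / 2 ^ d = x / 2 ^ d + 1 := by
      rw [Nat.add_div_right _ hp]
    have h2 : (x + 2 ^ d) % 2 ^ d = x % 2 ^ d := Nat.add_mod_right _ _
    simp only [Fd, h1, h2]
    omega
  · have hcd : 2 ^ c < 2 ^ d := Nat.pow_lt_pow_right (by norm_num) hlt
    have hx : x = 2 ^ d * (x / 2 ^ d) + x % 2 ^ d := (Nat.div_add_mod _ _).symm
    by_cases hsm : x % 2 ^ d + 2 ^ c < 2 ^ d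
    · have h1 : x + 2 ^ c = 2 ^ d * (x / 2 ^ d) + (x % 2 ^ d + 2 ^ c) := by omega
      have h2 : (x + 2 ^ c) / 2 ^ d = x / 2 ^ d := by
        rw [h1, Nat.mul_add_div hp, Nat.div_eq_of_lt hsm, Nat.add_zero]
      have h3 : (x + 2 ^ c) % 2 ^ d = x % 2 ^ d + 2 ^ c := by
        rw [h1, Nat.mul_add_mod, Nat.mod_eq_of_lt hsm]
      simp only [Fd, h2, h3]
      have := s2_add_two_pow_le c (x % 2 ^ d)
      omega
    · -- carry case
      obtain ⟨w, hwdef⟩ : ∃ w : ℕ, w = x % 2 ^ d + 2 ^ c - 2 ^ d := ⟨_, rfl⟩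
      have hw : w < 2 ^ c := by omega
      have hx2 : 2 ^ d * (x / 2 ^ d + 1) = 2 ^ d * (x / 2 ^ d) + 2 ^ d := by ring
      have h1 : x + 2 ^ c = 2 ^ d * (x / 2 ^ d + 1) + w := by omega
      have hwd : w / 2 ^ d = 0 := Nat.div_eq_of_lt (by omega)
      have hwm : w % 2 ^ d = w := Nat.mod_eq_of_lt (by omega)
      have h2 : (x + 2 ^ c) / 2 ^ d = x / 2 ^ d + 1 := by
        rw [h1, Nat.mul_add_div hp, hwd, Nat.add_zero]
      have h3 : (x + 2 ^ c) % 2 ^ d = w := by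
        rw [h1, Nat.mul_add_mod, hwm]
      -- x % 2^d = 2^c * (2^(d-c) - 1) + w
      have hsplit : 2 ^ c * (2 ^ (d - c) - 1) = 2 ^ d - 2 ^ c := by
        have : (2:ℕ) ^ c * 2 ^ (d - c) = 2 ^ d := by
          rw [← pow_add]; congr 1; omega
        have hq : (0:ℕ) < 2 ^ (d - c) := Nat.pow_pos (by norm_num)
        rw [Nat.mul_sub_one] <;> omega
      have hv2 : x % 2 ^ d = 2 ^ c * (2 ^ (d - c) - 1) + w := by omega
      have hs2v : s2 (x % 2 ^ d) = (d - c) + s2 w := by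
        rw [hv2, s2_mul_pow_add c _ w hw, s2_two_pow_sub_one]
      simp only [Fd, h2, h3]
      omega

lemma Fd_mul (d a : ℕ) (ha : a ≤ d) (n : ℕ) : ∀ x : ℕ, Fd d (x + n * 2 ^ a) ≤ Fd d x + n := by
  induction n with
  | zero => intro x; simp
  | succ n ih =>
    intro x
    have h1 : x + (n + 1) * 2 ^ a = (x + n * 2 ^ a) + 2 ^ a := by ring
    rw [h1]
    have := Fd_step d a ha (x + n * 2 ^ a)
    have := ih x
    omega

lemma Fd_zero (d : ℕ) : Fd d 0 = 0 := by
  simp [Fd, s2_zero]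

lemma Fd_sum (d : ℕ) (s : Finset ℕ) (m g : ℕ → ℕ) (hg : ∀ i ∈ s, g i ≤ d) :
    Fd d (∑ i ∈ s, m i * 2 ^ (g i)) ≤ ∑ i ∈ s, m i := by
  induction s using Finset.induction_on with
  | empty => simp [Fd_zero]
  | @insert a t ha ih =>
    rw [Finset.sum_insert ha, Finset.sum_insert ha]
    have h1 : Fd d (∑ i ∈ t, m i * 2 ^ (g i) + m a * 2 ^ (g a)) ≤
        Fd d (∑ i ∈ t, m i * 2 ^ (g i)) + m a :=
      Fd_mul d (g a) (hg a (Finset.mem_insert_self a t)) (m a) _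
    have h2 := ih (fun i hi => hg i (Finset.mem_insert_of_mem hi))
    have h3 : m a * 2 ^ (g a) + ∑ i ∈ t, m i * 2 ^ (g i) =
        ∑ i ∈ t, m i * 2 ^ (g i) + m a * 2 ^ (g a) := by ring
    rw [h3]
    omega

lemma sum_bits (x : ℕ) : ∀ n : ℕ, ∑ j ∈ Finset.range n, (x / 2 ^ j % 2) * 2 ^ j = x % 2 ^ n := by
  intro n
  induction n with
  | zero => simp [Nat.mod_one]
  | succ n ih =>
    rw [Finset.sum_range_succ, ih]
    have h1 : x % 2 ^ (n+1) = x % (2 ^ n * 2) := by rw [pow_succ]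
    rw [h1, Nat.mod_mul]
    ring

lemma sum_sub_pow (N : ℕ) : ∀ n : ℕ, 2 ^ n ≤ N →
    ∑ j ∈ Finset.range n, (N - 2 ^ (j+1)) = n * N + 2 - 2 ^ (n+1) := by
  intro n
  induction n with
  | zero => intro _; simp
  | succ n ih =>
    intro h
    have hn : (2:ℕ) ^ n ≤ N := by
      have : (2:ℕ) ^ n ≤ 2 ^ (n+1) := Nat.pow_le_pow_right (by norm_num) (by omega)
      omega
    rw [Finset.sum_range_succ, ih hn]
    have h1 : (n+1) * N = n * N + N := by ring
    have h2 : (2:ℕ) ^ (n+1+1) = 2 * 2 ^ (n+1) := by ring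
    have h3 : n = 0 ∨ N ≤ n * N := by
      rcases Nat.eq_zero_or_pos n with h | h
      · exact Or.inl h
      · exact Or.inr (Nat.le_mul_of_pos_left N h)
    have h4 : (2:ℕ) ^ (n+1) = 2 * 2 ^ n := by ring
    rcases h3 with h3 | h3
    · (subst h3; simp at *) <;> omega
    · omega

/-- The least stable solution `δ_e(2)` equals `(e-3)·2^{e-1} + 2`: every
`M ≥ (e-3)·2^{e-1} + 2` is a solution, while `(e-3)·2^{e-1} + 1` is not. -/
theorem stmt7 (e : ℕ) (he : 3 ≤ e) :
    (∀ M : ℕ, (e - 3) * 2 ^ (e - 1) + 2 ≤ M → Rep2 e M) ∧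
      ¬ Rep2 e ((e - 3) * 2 ^ (e - 1) + 1) := by
  obtain ⟨e', rfl⟩ : ∃ e', e = e' + 3 := ⟨e - 3, by omega⟩
  have he3 : e' + 3 - 3 = e' := by omega
  have he1 : e' + 3 - 1 = e' + 2 := by omega
  rw [he3, he1]
  have hp1 : (0:ℕ) < 2 ^ (e'+1) := Nat.pow_pos (by norm_num)
  have hp2 : (0:ℕ) < 2 ^ (e'+2) := Nat.pow_pos (by norm_num)
  have hpow12 : (2:ℕ) ^ (e'+2) = 2 * 2 ^ (e'+1) := by ring
  constructor
  · -- positive part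
    intro M hM
    set D := M - (e' * 2 ^ (e'+2) + 2) with hD
    set q := D / 2 ^ (e'+1) with hq
    set r := D % 2 ^ (e'+1) with hr
    have hrlt : r < 2 ^ (e'+1) := Nat.mod_lt _ hp1
    have hDqr : 2 ^ (e'+1) * q + r = D := Nat.div_add_mod _ _
    set b : ℕ → ℕ := fun j => r / 2 ^ j % 2 with hb
    set f : ℕ → ℕ := fun j => e' + 2 - (j + (1 - b j)) with hf
    refine ⟨0, fun i => (if i = 1 then q else 0) +
      ((Finset.range (e'+1)).filter (fun j => f j = i)).card, ?_⟩
    have hmaps : ∀ j ∈ Finset.range (e'+1), f j ∈ Finset.Icc 1 (e'+2) := by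
      intro j hj
      rw [Finset.mem_range] at hj
      simp only [Finset.mem_Icc, hf]
      have : 1 - b j ≤ 1 := by omega
      omega
    have key : ∑ i ∈ Finset.Icc 1 (e'+2),
        ((if i = 1 then q else 0) +
          ((Finset.range (e'+1)).filter (fun j => f j = i)).card) *
          (2 ^ (e'+2) - 2 ^ (e'+2-i))
        = q * 2 ^ (e'+1) + ∑ j ∈ Finset.range (e'+1), (2 ^ (e'+2) - 2 ^ (e'+2 - f j)) := by
      have hterm0 : ∀ i ∈ Finset.Icc 1 (e'+2), ((if i = 1 then q else 0) +
          ((Finset.range (e'+1)).filter (fun j => f j = i)).card) *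
          (2 ^ (e'+2) - 2 ^ (e'+2-i)) =
          (if i = 1 then q * (2 ^ (e'+2) - 2 ^ (e'+2-i)) else 0) +
          ∑ _j ∈ (Finset.range (e'+1)).filter (fun j => f j = i),
            (2 ^ (e'+2) - 2 ^ (e'+2-i)) := by
        intro i _
        rw [Finset.sum_const, add_mul, smul_eq_mul]
        by_cases hi : i = 1 <;> simp [hi]
      rw [Finset.sum_congr rfl hterm0, Finset.sum_add_distrib]
      congr 1
      · rw [Finset.sum_ite_eq' (Finset.Icc 1 (e'+2)) 1
          (fun i => q * (2 ^ (e'+2) - 2 ^ (e'+2-i)))]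
        have h1 : (1:ℕ) ∈ Finset.Icc 1 (e'+2) := by
          rw [Finset.mem_Icc]; omega
        rw [if_pos h1]
        have : e' + 2 - 1 = e' + 1 := by omega
        rw [this]
        have : (2:ℕ) ^ (e'+2) - 2 ^ (e'+1) = 2 ^ (e'+1) := by omega
        rw [this]
      · exact Finset.sum_fiberwise_of_maps_to' hmaps _
    simp only [show e' + 3 - 1 = e' + 2 from rfl]
    rw [key]
    have hterm : ∀ j ∈ Finset.range (e'+1),
        2 ^ (e'+2) - 2 ^ (e'+2 - f j) = (2 ^ (e'+2) - 2 ^ (j+1)) + b j * 2 ^ j := by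
      intro j hj
      rw [Finset.mem_range] at hj
      have hbj : b j < 2 := Nat.mod_lt _ (by norm_num)
      have hfj : e' + 2 - f j = j + (1 - b j) := by
        simp only [hf]
        have : 1 - b j ≤ 1 := by omega
        omega
      rw [hfj]
      have hle : (2:ℕ) ^ (j+1) ≤ 2 ^ (e'+2) := Nat.pow_le_pow_right (by norm_num) (by omega)
      have h2j : (2:ℕ) ^ (j+1) = 2 * 2 ^ j := by ring
      rcases (by omega : b j = 0 ∨ b j = 1) with hb0 | hb1
      · rw [hb0]
        have : j + (1 - 0) = j + 1 := by omega
        simp [this]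
      · rw [hb1]
        have : j + (1 - 1) = j := by omega
        rw [this]
        omega
    rw [Finset.sum_congr rfl hterm, Finset.sum_add_distrib]
    have hsum1 : ∑ j ∈ Finset.range (e'+1), (2 ^ (e'+2) - 2 ^ (j+1))
        = (e'+1) * 2 ^ (e'+2) + 2 - 2 ^ (e'+2) := by
      exact sum_sub_pow (2 ^ (e'+2)) (e'+1) (by omega)
    have hsum2 : ∑ j ∈ Finset.range (e'+1), b j * 2 ^ j = r := by
      have := sum_bits r (e'+1)
      rw [Nat.mod_eq_of_lt hrlt] at this
      exact this
    rw [hsum1, hsum2]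
    have h1 : (e'+1) * 2 ^ (e'+2) = e' * 2 ^ (e'+2) + 2 ^ (e'+2) := by ring
    have h2 : q * 2 ^ (e'+1) = 2 ^ (e'+1) * q := by ring
    have h3 : (2:ℕ) ^ (e'+3) * 0 = 0 := by ring
    omega
  · -- negative part
    rintro ⟨h, m, hM⟩
    simp only [show e' + 3 - 1 = e' + 2 from rfl] at hM
    set s := ∑ i ∈ Finset.Icc 1 (e'+2), m i with hs
    set T := ∑ i ∈ Finset.Icc 1 (e'+2), m i * 2 ^ (e'+2-i) with hT
    have hexp : ∀ i ∈ Finset.Icc 1 (e'+2), e' + 2 - i ≤ e' + 1 := by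
      intro i hi
      rw [Finset.mem_Icc] at hi
      omega
    have hsum : ∑ i ∈ Finset.Icc 1 (e'+2), m i * (2 ^ (e'+2) - 2 ^ (e'+2-i)) + T
        = s * 2 ^ (e'+2) := by
      rw [hT, ← Finset.sum_add_distrib, hs, Finset.sum_mul]
      refine Finset.sum_congr rfl fun i hi => ?_
      have h1 : (2:ℕ) ^ (e'+2-i) ≤ 2 ^ (e'+2) :=
        Nat.pow_le_pow_right (by norm_num) (by omega)
      rw [← Nat.mul_add, Nat.sub_add_cancel h1]
    have key : e' * 2 ^ (e'+2) + 1 + T = (2 * h + s) * 2 ^ (e'+2) := by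
      have h1 : (2:ℕ) ^ (e'+3) * h = 2 * (2 ^ (e'+2) * h) := by ring
      have h2 : (2 * h + s) * 2 ^ (e'+2) = 2 * (2 ^ (e'+2) * h) + s * 2 ^ (e'+2) := by ring
      omega
    have hK : e' + 1 ≤ 2 * h + s := by
      by_contra hcon
      push_neg at hcon
      have h1 : 2 * h + s ≤ e' := by omega
      have h2 : (2 * h + s) * 2 ^ (e'+2) ≤ e' * 2 ^ (e'+2) :=
        Nat.mul_le_mul_right _ h1
      omega
    set j := 2 * h + s - e' with hj
    have hj1 : 1 ≤ j := by omega
    have hTj : T + 1 = j * 2 ^ (e'+2) := by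
      have h1 : (2 * h + s) * 2 ^ (e'+2) = e' * 2 ^ (e'+2) + j * 2 ^ (e'+2) := by
        rw [← Nat.add_mul]
        congr 1
        omega
      omega
    have hT2 : T = (2 * j - 1) * 2 ^ (e'+1) + (2 ^ (e'+1) - 1) := by
      have h1 : (2 * j - 1) * 2 ^ (e'+1) + 1 * 2 ^ (e'+1) = 2 * j * 2 ^ (e'+1) := by
        rw [← Nat.add_mul]
        congr 1
        omega
      have h2 : j * 2 ^ (e'+2) = 2 * j * 2 ^ (e'+1) := by ring
      omega
    have hFT : Fd (e'+1) T = 2 * j - 1 + (e'+1) := by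
      rw [Fd, hT2]
      have hdiv : ((2 * j - 1) * 2 ^ (e'+1) + (2 ^ (e'+1) - 1)) / 2 ^ (e'+1) = 2 * j - 1 := by
        rw [show (2 * j - 1) * 2 ^ (e'+1) = 2 ^ (e'+1) * (2 * j - 1) from by ring,
          Nat.mul_add_div hp1, Nat.div_eq_of_lt (by omega), Nat.add_zero]
      have hmod : ((2 * j - 1) * 2 ^ (e'+1) + (2 ^ (e'+1) - 1)) % 2 ^ (e'+1)
          = 2 ^ (e'+1) - 1 := by
        rw [show (2 * j - 1) * 2 ^ (e'+1) = 2 ^ (e'+1) * (2 * j - 1) from by ring,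
          Nat.mul_add_mod, Nat.mod_eq_of_lt (by omega)]
      rw [hdiv, hmod, s2_two_pow_sub_one]
    have hFs : Fd (e'+1) T ≤ s := by
      rw [hT]
      exact Fd_sum (e'+1) _ m _ hexp
    omega
end

section
/- Let e ≥ 5 and let G be the dihedral group of order 2^{e+1}. Then every integer g ≥ (e−3)·2^e + 4 lies in sp(G), while (e−3)·2^e + 3 does not lie in sp(G). Hence the stable upper genus of G equals (e−3)·2^e + 4. -/
open scoped commutatorElement

/-- Genus spectrum membership, as in Riemann's Existence Theorem. -/
def IsGenus (G : Type*) [Group G] (g : ℕ) : Prop :=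
  2 ≤ g ∧ ∃ (h r : ℕ) (n : Fin r → ℕ) (a b : Fin h → G) (c : Fin r → G),
    (∀ j, 2 ≤ n j) ∧ (∀ j, orderOf (c j) = n j) ∧
    Subgroup.closure (Set.range a ∪ Set.range b ∪ Set.range c) = ⊤ ∧
    (List.ofFn (fun i => ⁅a i, b i⁆)).prod * (List.ofFn c).prod = 1 ∧
    2 * ((g : ℚ) - 1) =
      (Nat.card G : ℚ) * (2 * ((h : ℚ) - 1) + ∑ j, (1 - 1 / (n j : ℚ)))

namespace Aux
open DihedralGroup Multiplicative


lemma list_two_pow_sum (m : ℕ) : ((List.range m).map (2 ^ ·)).sum = 2 ^ m - 1 := by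
  induction m with
  | zero => simp
  | succ m ih =>
    rw [List.range_succ, List.map_append, List.sum_append, ih]
    have h1 : 1 ≤ 2 ^ m := Nat.one_le_two_pow
    simp [pow_succ]
    omega

/-- list of bit positions of `M` below `e` -/
def expL (e M : ℕ) : List ℕ := (List.range e).filter (M.testBit ·)

lemma expL_mem {e M v : ℕ} (h : v ∈ expL e M) : v < e := by
  simp only [expL, List.mem_filter, List.mem_range] at h
  exact h.1

lemma expL_sum (e M : ℕ) : ((expL e M).map (2 ^ ·)).sum = M % 2 ^ e := by
  induction e with
  | zero => simp [expL, Nat.mod_one]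
  | succ e ih =>
    rw [expL, List.range_succ, List.filter_append, List.map_append, List.sum_append]
    rw [show (List.range e).filter (M.testBit ·) = expL e M from rfl, ih]
    have hb : M.testBit e = decide (M / 2 ^ e % 2 = 1) := Nat.testBit_eq_decide_div_mod_eq
    have hm : M % 2 ^ (e + 1) = M % 2 ^ e + 2 ^ e * (M / 2 ^ e % 2) := Nat.mod_pow_succ
    rcases Nat.mod_two_eq_zero_or_one (M / 2 ^ e) with h0 | h0
    · simp [hb, h0, hm]
    · simp [hb, h0, hm]

lemma expL_sum' {e M : ℕ} (h : M < 2 ^ e) : ((expL e M).map (2 ^ ·)).sum = M := by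
  rw [expL_sum, Nat.mod_eq_of_lt h]

lemma expL_len_even {e M : ℕ} (hM : 2 ∣ M) (he : 1 ≤ e) :
    (expL e M).length ≤ e - 1 := by
  obtain ⟨e', rfl⟩ : ∃ e', e = e' + 1 := ⟨e - 1, by omega⟩
  have h0 : M.testBit 0 = false := by
    rw [Nat.testBit_eq_decide_div_mod_eq]
    simp only [pow_zero, Nat.div_one, decide_eq_false_iff_not]
    omega
  rw [expL, List.range_succ_eq_map, List.filter_cons, h0]
  simp only [Nat.succ_sub_one]
  calc (List.filter (M.testBit ·) (List.map Nat.succ (List.range e'))).length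
      ≤ (List.map Nat.succ (List.range e')).length := List.length_filter_le _ _
    _ = e' := by simp

lemma expL_len_small {e M : ℕ} (hM : 2 ∣ M) (hlt : M + 4 ≤ 2 ^ e) (he : 1 ≤ e) :
    (expL e M).length ≤ e - 2 := by
  obtain ⟨e', rfl⟩ : ∃ e', e = e' + 1 := ⟨e - 1, by omega⟩
  by_contra hcon
  push_neg at hcon
  have h0 : M.testBit 0 = false := by
    rw [Nat.testBit_eq_decide_div_mod_eq]
    simp only [pow_zero, Nat.div_one, decide_eq_false_iff_not]
    omega
  have hexp : expL (e' + 1) M = List.filter (M.testBit ·) (List.map Nat.succ (List.range e')) := by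
    rw [expL, List.range_succ_eq_map, List.filter_cons, h0]; simp
  have hlen : (expL (e' + 1) M).length ≤ e' := by
    rw [hexp]
    calc _ ≤ (List.map Nat.succ (List.range e')).length := List.length_filter_le _ _
      _ = e' := by simp
  have heq : (expL (e' + 1) M).length = e' := by omega
  have hall : List.filter (M.testBit ·) (List.map Nat.succ (List.range e'))
      = List.map Nat.succ (List.range e') := by
    apply List.filter_eq_self.2
    apply List.length_filter_eq_length_iff.1
    rw [← hexp, heq]; simp
  have hsum := expL_sum' (show M < 2 ^ (e' + 1) by omega)
  rw [hexp, hall, List.map_map] at hsum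
  have : ((List.range e').map (2 ^ ·)).sum * 2 = M := by
    rw [← hsum, ← List.sum_map_mul_right]
    congr 1
  rw [list_two_pow_sum] at this
  have h1 : 1 ≤ 2 ^ e' := Nat.one_le_two_pow
  have h2 : 2 ^ (e' + 1) = 2 * 2 ^ e' := by ring
  omega



open DihedralGroup Multiplicative

variable {n : ℕ}

lemma natCast_val_cast (i : ZMod n) [NeZero n] : ((i.val : ℕ) : ZMod n) = i := by
  rw [ZMod.natCast_val, ZMod.cast_id]

lemma r_natCast_pow (m : ℕ) : (r (m : ZMod n) : DihedralGroup n) = r 1 ^ m := by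
  rw [r_one_pow]

lemma orderOf_r_natCast [NeZero n] {m : ℕ} (h : m < n) :
    orderOf (r (m : ZMod n) : DihedralGroup n) = n / Nat.gcd n m := by
  rw [orderOf_r, ZMod.val_cast_of_lt h]

lemma orderOf_r_two_pow {e v : ℕ} (hv : v < e) :
    orderOf (r ((2 ^ v : ℕ) : ZMod (2 ^ e)) : DihedralGroup (2 ^ e)) = 2 ^ (e - v) := by
  have : NeZero (2 ^ e) := ⟨by positivity⟩
  rw [orderOf_r_natCast (Nat.pow_lt_pow_right one_lt_two hv)]
  rw [Nat.gcd_eq_right (pow_dvd_pow 2 hv.le)]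
  rw [Nat.pow_div hv.le (by norm_num)]

lemma orderOf_r_odd {e m : ℕ} (hm : Odd m) (h : m < 2 ^ e) :
    orderOf (r ((m : ℕ) : ZMod (2 ^ e)) : DihedralGroup (2 ^ e)) = 2 ^ e := by
  have : NeZero (2 ^ e) := ⟨by positivity⟩
  rw [orderOf_r_natCast h]
  have hcop : Nat.Coprime (2 ^ e) m := by
    apply Nat.Coprime.pow_left
    rw [Nat.Prime.coprime_iff_not_dvd Nat.prime_two]
    have := Nat.odd_iff.1 hm
    omega
  rw [hcop.gcd_eq_one, Nat.div_one]

/-- every element has order dividing `2^e` -/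
lemma orderOf_dvd_two_pow {e : ℕ} (he : 1 ≤ e) (x : DihedralGroup (2 ^ e)) :
    orderOf x ∣ 2 ^ e := by
  have : NeZero (2 ^ e) := ⟨by positivity⟩
  cases x with
  | r i =>
    rw [orderOf_r]
    exact Nat.div_dvd_of_dvd (Nat.gcd_dvd_left _ _)
  | sr i =>
    rw [orderOf_sr]
    exact Dvd.dvd.trans (by norm_num) (pow_dvd_pow 2 he)

/-- generation by sr 0, sr 1 -/
lemma closure_sr_top [NeZero n] {S : Set (DihedralGroup n)}
    (h0 : sr 0 ∈ S) (h1 : sr 1 ∈ S) : Subgroup.closure S = ⊤ := by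
  rw [eq_top_iff]
  intro x _
  have hr1 : (r 1 : DihedralGroup n) ∈ Subgroup.closure S := by
    have : (r 1 : DihedralGroup n) = sr 0 * sr 1 := by
      rw [sr_mul_sr, sub_zero]
    rw [this]
    exact mul_mem (Subgroup.subset_closure h0) (Subgroup.subset_closure h1)
  have hri : ∀ i : ZMod n, (r i : DihedralGroup n) ∈ Subgroup.closure S := by
    intro i
    have : (r i : DihedralGroup n) = r 1 ^ i.val := by
      rw [r_one_pow, natCast_val_cast]
    rw [this]
    exact pow_mem hr1 _
  cases x with
  | r i => exact hri i
  | sr i =>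
    have : (sr i : DihedralGroup n) = sr 0 * r i := by
      rw [sr_mul_r, zero_add]
    rw [this]
    exact mul_mem (Subgroup.subset_closure h0) (hri i)

/-- the reflection sign homomorphism -/
def sgn : DihedralGroup n →* Multiplicative (ZMod 2) where
  toFun x := match x with
    | DihedralGroup.r _ => 1
    | DihedralGroup.sr _ => ofAdd 1
  map_one' := rfl
  map_mul' := by
    rintro (i | i) (j | j) <;>
      simp only [r_mul_r, r_mul_sr, sr_mul_r, sr_mul_sr] <;> decide

lemma sgn_r (i : ZMod n) : sgn (r i : DihedralGroup n) = (1 : Multiplicative (ZMod 2)) := rfl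
lemma sgn_sr (i : ZMod n) : sgn (sr i : DihedralGroup n) = ofAdd (1 : ZMod 2) := rfl

/-- the rotation parity homomorphism (n even) -/
def par (hn : (2 : ℕ) ∣ n) : DihedralGroup n →* Multiplicative (ZMod 2) where
  toFun x := match x with
    | DihedralGroup.r i => ofAdd (ZMod.castHom hn (ZMod 2) i)
    | DihedralGroup.sr i => ofAdd (ZMod.castHom hn (ZMod 2) i)
  map_one' := by
    show ofAdd (ZMod.castHom hn (ZMod 2) 0) = 1
    simp
  map_mul' := by
    have key : ∀ a b : ZMod 2, a - b = a + b := by decide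
    rintro (i | i) (j | j) <;>
      simp only [r_mul_r, r_mul_sr, sr_mul_r, sr_mul_sr, map_add, map_sub, ← ofAdd_add, key] <;>
      congr 1 <;> ring

lemma par_r (hn : (2:ℕ) ∣ n) (i : ZMod n) :
    par hn (r i : DihedralGroup n) = ofAdd (ZMod.castHom hn (ZMod 2) i) := rfl
lemma par_sr (hn : (2:ℕ) ∣ n) (i : ZMod n) :
    par hn (sr i : DihedralGroup n) = ofAdd (ZMod.castHom hn (ZMod 2) i) := rfl



open DihedralGroup

variable {e : ℕ}

/-- weight function -/
noncomputable def wt {G : Type*} [Group G] (x : G) : ℚ := 1 - 1 / (orderOf x : ℚ)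

def pairsL (e k : ℕ) : List (DihedralGroup (2^e)) := List.replicate (2*k) (sr 0)

def rotL (e : ℕ) (L : List ℕ) : List (DihedralGroup (2^e)) :=
  L.map (fun v => r ((2^v : ℕ) : ZMod (2^e)))

lemma pairsL_prod (k : ℕ) : (pairsL e k).prod = 1 := by
  rw [pairsL, List.prod_replicate, pow_mul]
  rw [show (sr 0 : DihedralGroup (2^e)) ^ 2 = sr 0 * sr 0 from sq _, sr_mul_self, one_pow]

lemma pairsL_map_sum (k : ℕ) : ((pairsL e k).map wt).sum = k := by
  have hsr : wt (sr 0 : DihedralGroup (2^e)) = 1/2 := by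
    rw [wt, orderOf_sr]; norm_num
  rw [pairsL, List.map_replicate, hsr, List.sum_replicate, nsmul_eq_mul]
  push_cast; ring

lemma rotL_prod (L : List ℕ) :
    (rotL e L).prod = r (((L.map (2 ^ ·)).sum : ℕ) : ZMod (2^e)) := by
  induction L with
  | nil => simp [rotL]
  | cons v L ih =>
    rw [rotL, List.map_cons, List.prod_cons, ← rotL, ih, r_mul_r, List.map_cons, List.sum_cons]
    congr 1
    push_cast
    ring

lemma rotL_map_sum (L : List ℕ) (hL : ∀ v ∈ L, v < e) :
    ((rotL e L).map wt).sum = L.length - (((L.map (2 ^ ·)).sum : ℕ) : ℚ) / 2^e := by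
  induction L with
  | nil => simp [rotL]
  | cons v L ih =>
    have hv : v < e := hL v List.mem_cons_self
    have hord : orderOf (r ((2^v : ℕ) : ZMod (2^e)) : DihedralGroup (2^e)) = 2^(e-v) :=
      orderOf_r_two_pow hv
    have hwt : wt (r ((2^v : ℕ) : ZMod (2^e)) : DihedralGroup (2^e)) = 1 - (2^v : ℚ)/2^e := by
      rw [wt, hord]
      have h2 : ((2:ℚ)^(e-v)) * 2^v = 2^e := by
        rw [← pow_add]
        congr 1
        omega
      have hne : ((2:ℚ)^v) ≠ 0 := by positivity
      have hne2 : ((2:ℚ)^e) ≠ 0 := by positivity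
      push_cast
      rw [show ((2:ℚ)^(e-v)) = 2^e/2^v by rw [eq_div_iff hne]; exact h2]
      rw [one_div_div]
    rw [rotL, List.map_cons, List.map_cons, List.sum_cons, ← rotL,
      ih (fun w hw => hL w (List.mem_cons_of_mem _ hw)), List.map_cons, List.sum_cons, hwt]
    simp only [List.length_cons]
    push_cast
    have h2e : ((2:ℚ)^e) ≠ 0 := by positivity
    field_simp
    ring

lemma mem_rotL {x : DihedralGroup (2^e)} {L : List ℕ} (h : x ∈ rotL e L) :
    ∃ v ∈ L, x = r ((2^v : ℕ) : ZMod (2^e)) := by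
  rw [rotL, List.mem_map] at h
  obtain ⟨v, hv, rfl⟩ := h
  exact ⟨v, hv, rfl⟩

lemma mem_pairsL {x : DihedralGroup (2^e)} {k : ℕ} (h : x ∈ pairsL e k) : x = sr 0 :=
  List.eq_of_mem_replicate h




lemma isGenus_of_list (G : Type*) [Group G] (g : ℕ) (hg : 2 ≤ g) (l : List G)
    (h2 : ∀ x ∈ l, 2 ≤ orderOf x)
    (hgen : Subgroup.closure {x | x ∈ l} = ⊤)
    (hprod : l.prod = 1)
    (hRH : 2 * ((g : ℚ) - 1) =
      (Nat.card G : ℚ) * ((l.map wt).sum - 2)) :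
    IsGenus G g := by
  refine ⟨hg, 0, l.length, fun j => orderOf (l.get j), (fun i => i.elim0), (fun i => i.elim0),
    l.get, fun j => h2 _ (l.get_mem _), fun j => rfl, ?_, ?_, ?_⟩
  · have h1 : Set.range (fun i : Fin 0 => (i.elim0 : G)) = ∅ := Set.range_eq_empty _
    have h2 : Set.range l.get = {x | x ∈ l} := by
      ext x
      simp [List.mem_iff_get, Set.mem_range, eq_comm]
    rw [h1, h2, Set.empty_union, Set.empty_union, hgen]
  · simp only [List.ofFn_zero, List.prod_nil, one_mul, List.ofFn_get]
    exact hprod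
  · rw [hRH]
    congr 1
    have : (l.map wt).sum
        = ∑ j, (1 - 1 / (orderOf (l.get j) : ℚ)) := by
      conv_lhs => rw [← List.ofFn_get l]
      rw [List.map_ofFn, List.sum_ofFn]
      rfl
    rw [this]
    push_cast
    ring


lemma part1_odd (e q s : ℕ) (he : 5 ≤ e) (hs : s < 2^e) (hodd : s % 2 = 1)
    (hq : e - 3 ≤ q) (hqs : q = e - 3 → 3 ≤ s) :
    IsGenus (DihedralGroup (2^e)) (q * 2^e + s + 1) := by
  haveI : NeZero (2^e) := ⟨by positivity⟩
  have h2e : (32:ℕ) ≤ 2^e := by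
    calc (32:ℕ) = 2^5 := by norm_num
    _ ≤ 2^e := Nat.pow_le_pow_right (by norm_num) he
  set M := 2^e - s - 1 with hMdef
  have hM2 : 2 ∣ M := by
    have : 2 ∣ 2^e := dvd_pow_self 2 (by omega)
    omega
  have hMlt : M < 2^e := by omega
  set L := expL e M with hLdef
  set t := L.length with htdef
  have hLmem : ∀ v ∈ L, v < e := fun v hv => expL_mem hv
  have hLsum : (L.map (2^·)).sum = M := expL_sum' hMlt
  have hts : t ≤ q + 1 := by
    rcases Nat.lt_or_ge s 3 with h3 | h3
    · have hq2 : e - 2 ≤ q := by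
        rcases Nat.eq_or_lt_of_le hq with h | h
        · exfalso; have := hqs h.symm; omega
        · omega
      have hle := expL_len_even (e := e) hM2 (by omega : 1 ≤ e)
      rw [← hLdef] at hle
      omega
    · have hle := expL_len_small (e := e) hM2 (by omega) (by omega)
      rw [← hLdef] at hle
      omega
  refine isGenus_of_list _ _ ?_
    (pairsL e (q + 1 - t) ++ ([sr 0, sr 1, r ((s:ℕ) : ZMod (2^e))] ++ rotL e L))
    ?_ ?_ ?_ ?_
  · calc 2 ≤ s + 1 := by omega
    _ ≤ q * 2^e + s + 1 := by omega
  · intro x hx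
    rcases List.mem_append.1 hx with hx | hx
    · rw [mem_pairsL hx, orderOf_sr]
    rcases List.mem_append.1 hx with hx | hx
    · simp only [List.mem_cons, List.not_mem_nil, or_false] at hx
      rcases hx with rfl | rfl | rfl
      · rw [orderOf_sr]
      · rw [orderOf_sr]
      · rw [orderOf_r_odd (Nat.odd_iff.2 hodd) hs]; omega
    · obtain ⟨v, hv, rfl⟩ := mem_rotL hx
      rw [orderOf_r_two_pow (hLmem v hv)]
      calc 2 = 2^1 := by norm_num
      _ ≤ 2^(e-v) := Nat.pow_le_pow_right (by norm_num) (by have := hLmem v hv; omega)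
  · apply closure_sr_top (S := _)
    · show sr 0 ∈ {x | x ∈ _}
      simp [List.mem_append]
    · show sr 1 ∈ {x | x ∈ _}
      simp [List.mem_append]
  · rw [List.prod_append, List.prod_append, pairsL_prod, one_mul, rotL_prod, hLsum]
    have hcore : ([sr 0, sr 1, r ((s:ℕ) : ZMod (2^e))] : List (DihedralGroup (2^e))).prod
        = r (((1+s : ℕ)) : ZMod (2^e)) := by
      show sr 0 * (sr 1 * (r ((s:ℕ) : ZMod (2^e)) * 1)) = _
      rw [mul_one, sr_mul_r, sr_mul_sr, sub_zero]
      congr 1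
      push_cast
      ring
    rw [hcore, r_mul_r, ← Nat.cast_add, show (1+s)+M = 2^e by omega,
      ZMod.natCast_self, ← one_def]
  · rw [List.map_append, List.map_append, List.sum_append, List.sum_append,
      pairsL_map_sum, rotL_map_sum L hLmem, hLsum]
    have hcsum : (List.map wt ([sr 0, sr 1, r ((s:ℕ) : ZMod (2^e))] :
        List (DihedralGroup (2^e)))).sum = 2 - 1/(2^e : ℚ) := by
      rw [List.map_cons, List.map_cons, List.map_cons, List.map_nil,
        List.sum_cons, List.sum_cons, List.sum_cons, List.sum_nil]
      rw [wt, wt, wt, orderOf_sr, orderOf_sr, orderOf_r_odd (Nat.odd_iff.2 hodd) hs]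
      push_cast
      ring
    rw [hcsum, DihedralGroup.nat_card]
    have hcast1 : ((q + 1 - t : ℕ) : ℚ) = (q:ℚ) + 1 - t := by
      rw [Nat.cast_sub hts]; push_cast; ring
    have hcast2 : ((M : ℕ) : ℚ) = 2^e - s - 1 := by
      rw [hMdef, Nat.cast_sub (by omega), Nat.cast_sub (by omega)]
      push_cast; ring
    rw [hcast1, hcast2]
    have h2eQ : ((2:ℚ)^e) ≠ 0 := by positivity
    push_cast
    field_simp
    ring

lemma part1_even (e q s : ℕ) (he : 5 ≤ e) (hs : s < 2^e) (heven : s % 2 = 0) (hs2 : 2 ≤ s)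
    (hq : e - 3 ≤ q) (hqs : q = e - 3 → 3 ≤ s) :
    IsGenus (DihedralGroup (2^e)) (q * 2^e + s + 1) := by
  haveI : NeZero (2^e) := ⟨by positivity⟩
  have h2e : (32:ℕ) ≤ 2^e := by
    calc (32:ℕ) = 2^5 := by norm_num
    _ ≤ 2^e := Nat.pow_le_pow_right (by norm_num) he
  set M := 2^e - s with hMdef
  have hM2 : 2 ∣ M := by
    have : 2 ∣ 2^e := dvd_pow_self 2 (by omega)
    omega
  have hMlt : M < 2^e := by omega
  set L := expL e M with hLdef
  set t := L.length with htdef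
  have hLmem : ∀ v ∈ L, v < e := fun v hv => expL_mem hv
  have hLsum : (L.map (2^·)).sum = M := expL_sum' hMlt
  have hts : t ≤ q + 1 := by
    rcases Nat.lt_or_ge s 3 with h3 | h3
    · have hq2 : e - 2 ≤ q := by
        rcases Nat.eq_or_lt_of_le hq with h | h
        · exfalso; have := hqs h.symm; omega
        · omega
      have hle := expL_len_even (e := e) hM2 (by omega : 1 ≤ e)
      rw [← hLdef] at hle
      omega
    · have hle := expL_len_small (e := e) hM2 (by omega) (by omega)
      rw [← hLdef] at hle
      omega
  refine isGenus_of_list _ _ ?_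
    (pairsL e (q + 1 - t) ++ ([sr 0, sr 1, sr 1, sr ((s:ℕ) : ZMod (2^e))] ++ rotL e L))
    ?_ ?_ ?_ ?_
  · calc 2 ≤ s + 1 := by omega
    _ ≤ q * 2^e + s + 1 := by omega
  · intro x hx
    rcases List.mem_append.1 hx with hx | hx
    · rw [mem_pairsL hx, orderOf_sr]
    rcases List.mem_append.1 hx with hx | hx
    · simp only [List.mem_cons, List.not_mem_nil, or_false] at hx
      rcases hx with rfl | rfl | rfl | rfl <;> rw [orderOf_sr]
    · obtain ⟨v, hv, rfl⟩ := mem_rotL hx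
      rw [orderOf_r_two_pow (hLmem v hv)]
      calc 2 = 2^1 := by norm_num
      _ ≤ 2^(e-v) := Nat.pow_le_pow_right (by norm_num) (by have := hLmem v hv; omega)
  · apply closure_sr_top (S := _)
    · show sr 0 ∈ {x | x ∈ _}
      simp [List.mem_append]
    · show sr 1 ∈ {x | x ∈ _}
      simp [List.mem_append]
  · rw [List.prod_append, List.prod_append, pairsL_prod, one_mul, rotL_prod, hLsum]
    have hcore : ([sr 0, sr 1, sr 1, sr ((s:ℕ) : ZMod (2^e))] :
        List (DihedralGroup (2^e))).prod = r ((s : ℕ) : ZMod (2^e)) := by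
      show sr 0 * (sr 1 * (sr 1 * (sr ((s:ℕ) : ZMod (2^e)) * 1))) = _
      rw [mul_one, sr_mul_sr, sr_mul_r, sr_mul_sr]
      congr 1
      ring
    rw [hcore, r_mul_r, ← Nat.cast_add, show s + M = 2^e by omega,
      ZMod.natCast_self, ← one_def]
  · rw [List.map_append, List.map_append, List.sum_append, List.sum_append,
      pairsL_map_sum, rotL_map_sum L hLmem, hLsum]
    have hcsum : (List.map wt ([sr 0, sr 1, sr 1, sr ((s:ℕ) : ZMod (2^e))] :
        List (DihedralGroup (2^e)))).sum = 2 := by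
      rw [List.map_cons, List.map_cons, List.map_cons, List.map_cons, List.map_nil,
        List.sum_cons, List.sum_cons, List.sum_cons, List.sum_cons, List.sum_nil]
      simp only [wt, orderOf_sr]
      norm_num
    rw [hcsum, DihedralGroup.nat_card]
    have hcast1 : ((q + 1 - t : ℕ) : ℚ) = (q:ℚ) + 1 - t := by
      rw [Nat.cast_sub hts]; push_cast; ring
    have hcast2 : ((M : ℕ) : ℚ) = 2^e - s := by
      rw [hMdef, Nat.cast_sub (by omega)]
      push_cast; ring
    rw [hcast1, hcast2]
    have h2eQ : ((2:ℚ)^e) ≠ 0 := by positivity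
    push_cast
    field_simp
    ring

lemma part1_zero (e q : ℕ) (he : 5 ≤ e) (hq : e - 3 ≤ q) :
    IsGenus (DihedralGroup (2^e)) (q * 2^e + 1) := by
  haveI : NeZero (2^e) := ⟨by positivity⟩
  have h2e : (32:ℕ) ≤ 2^e := by
    calc (32:ℕ) = 2^5 := by norm_num
    _ ≤ 2^e := Nat.pow_le_pow_right (by norm_num) he
  refine isGenus_of_list _ _ ?_
    (pairsL e q ++ [sr 0, sr 1, sr 1, sr 0])
    ?_ ?_ ?_ ?_
  · have h1 : 1 ≤ q := by omega
    calc 2 = 1 * 2^0 + 1 := by norm_num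
    _ ≤ q * 2^e + 1 := by
        have : 1 * 2^0 ≤ q * 2^e := Nat.mul_le_mul h1 (Nat.pow_le_pow_right (by norm_num) (by omega))
        omega
  · intro x hx
    rcases List.mem_append.1 hx with hx | hx
    · rw [mem_pairsL hx, orderOf_sr]
    · simp only [List.mem_cons, List.not_mem_nil, or_false] at hx
      rcases hx with rfl | rfl | rfl | rfl <;> rw [orderOf_sr]
  · apply closure_sr_top (S := _)
    · show sr 0 ∈ {x | x ∈ _}
      simp [List.mem_append]
    · show sr 1 ∈ {x | x ∈ _}
      simp [List.mem_append]
  · rw [List.prod_append, pairsL_prod, one_mul]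
    show sr 0 * (sr 1 * (sr 1 * (sr 0 * 1))) = 1
    rw [mul_one, sr_mul_sr, sr_mul_r, sr_mul_sr]
    norm_num [← one_def]
  · rw [List.map_append, List.sum_append, pairsL_map_sum]
    have hcsum : (List.map wt ([sr 0, sr 1, sr 1, sr 0] :
        List (DihedralGroup (2^e)))).sum = 2 := by
      rw [List.map_cons, List.map_cons, List.map_cons, List.map_cons, List.map_nil,
        List.sum_cons, List.sum_cons, List.sum_cons, List.sum_cons, List.sum_nil]
      simp only [wt, orderOf_sr]
      norm_num
    rw [hcsum, DihedralGroup.nat_card]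
    push_cast
    ring

lemma part1 (e g : ℕ) (he : 5 ≤ e) (hg : (e-3)*2^e + 4 ≤ g) :
    IsGenus (DihedralGroup (2^e)) g := by
  have h2e : (32:ℕ) ≤ 2^e := by
    calc (32:ℕ) = 2^5 := by norm_num
    _ ≤ 2^e := Nat.pow_le_pow_right (by norm_num) he
  set q := (g-1)/2^e with hqdef
  set s := (g-1)%2^e with hsdef
  have h1 : 2^e * q + s = g - 1 := Nat.div_add_mod _ _
  have hslt : s < 2^e := Nat.mod_lt _ (by positivity)
  have hgpos : 1 ≤ g := by omega
  have hg1 : g = q*2^e + s + 1 := by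
    rw [mul_comm] at h1
    omega
  have hkey : (e-3)*2^e + 3 ≤ q*2^e + s := by
    have : (e-3)*2^e + 3 ≤ g - 1 := by omega
    omega
  have hq : e - 3 ≤ q := by
    by_contra hcon
    push_neg at hcon
    have hq1 : q + 1 ≤ e - 3 := by omega
    have : (q+1) * 2^e ≤ (e-3) * 2^e := Nat.mul_le_mul_right _ hq1
    have h2 : q * 2^e + s < (q+1) * 2^e := by
      have : (q+1) * 2^e = q * 2^e + 2^e := by ring
      omega
    omega
  have hqs : q = e - 3 → 3 ≤ s := by
    intro hqe
    rw [hqe] at hkey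
    omega
  rw [hg1]
  rcases Nat.eq_zero_or_pos s with h0 | hpos
  · rw [h0]
    exact part1_zero e q he hq
  · rcases Nat.mod_two_eq_zero_or_one s with hpar | hpar
    · exact part1_even e q s he hslt hpar (by omega) hq hqs
    · exact part1_odd e q s he hslt hpar hq hqs

lemma card_le_map_two_pow_sum (C : Multiset ℕ) : C.card ≤ (C.map (2^·)).sum := by
  induction C using Multiset.induction with
  | empty => simp
  | cons a C ih =>
    rw [Multiset.map_cons, Multiset.sum_cons, Multiset.card_cons]
    have : 1 ≤ 2^a := Nat.one_le_two_pow
    omega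

lemma multiset_range_succ_zero (n : ℕ) :
    Multiset.range (n+1) = 0 ::ₘ (Multiset.range n).map (·+1) := by
  rw [Multiset.range, List.range_succ_eq_map]
  rfl

lemma key (e : ℕ) (he : 5 ≤ e) :
    ∀ (N : ℕ) (M : Multiset ℕ) (A : ℕ), M.card = N → 1 ≤ A →
    (∀ w ∈ M, w < e) → (M.map (2 ^ ·)).sum + 2 = A * 2 ^ e →
    (2*A + e ≤ Multiset.card M + 3) ∧
    (Multiset.card M + 3 = 2*A + e →
       M = Multiset.replicate (2*A-1) (e-1) + (Multiset.range (e-2)).map (·+1)) ∧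
    (Multiset.card M + 3 = 2*A + e + 1 → M.count (e-1) ≤ 2*A - 1) := by
  intro N
  induction N using Nat.strong_induction_on with
  | _ N IH =>
  intro M A hcard hA hmem hsum
  by_cases hdup : ∃ w, w < e - 1 ∧ 2 ≤ M.count w
  · -- merge two equal low entries
    obtain ⟨w, hw, hc⟩ := hdup
    have hw1 : w ∈ M := by rw [← Multiset.count_pos]; omega
    have hw2 : w ∈ M.erase w := by rw [← Multiset.count_pos, Multiset.count_erase_self]; omega
    set R := (M.erase w).erase w with hRdef
    have hM : M = w ::ₘ w ::ₘ R := by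
      rw [hRdef, Multiset.cons_erase hw2, Multiset.cons_erase hw1]
    have hcards : Multiset.card M = Multiset.card R + 2 := by
      rw [hM, Multiset.card_cons, Multiset.card_cons]
    have hmem' : ∀ u ∈ (w+1) ::ₘ R, u < e := by
      intro u hu
      rcases Multiset.mem_cons.1 hu with rfl | hu
      · omega
      · exact hmem u (by rw [hM]; exact Multiset.mem_cons_of_mem (Multiset.mem_cons_of_mem hu))
    have hsum' : (((w+1) ::ₘ R).map (2 ^ ·)).sum + 2 = A * 2 ^ e := by
      rw [Multiset.map_cons, Multiset.sum_cons]
      rw [hM, Multiset.map_cons, Multiset.map_cons, Multiset.sum_cons, Multiset.sum_cons] at hsum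
      rw [pow_succ]
      omega
    obtain ⟨ih1, ih2, ih3⟩ := IH (Multiset.card R + 1) (by omega) ((w+1) ::ₘ R) A
      (by rw [Multiset.card_cons]) hA hmem' hsum'
    rw [Multiset.card_cons] at ih1 ih2 ih3
    refine ⟨by omega, by omega, ?_⟩
    intro hcnt
    have hstruct := ih2 (by omega)
    have hcntM : M.count (e-1) = R.count (e-1) := by
      rw [hM, Multiset.count_cons, Multiset.count_cons]
      have : ¬ (e-1 = w) := by omega
      simp [this]
    have hcntM' : R.count (e-1) ≤ Multiset.count (e-1) ((w+1) ::ₘ R) := by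
      rw [Multiset.count_cons]
      omega
    have hcnt' : Multiset.count (e-1) ((w+1) ::ₘ R)
        = Multiset.count (e-1) (Multiset.replicate (2*A-1) (e-1)
            + (Multiset.range (e-2)).map (·+1)) := by rw [hstruct]
    rw [Multiset.count_add, Multiset.count_replicate_self] at hcnt'
    have hz : Multiset.count (e-1) ((Multiset.range (e-2)).map (·+1)) = 0 := by
      apply Multiset.count_eq_zero_of_notMem
      intro hmem2
      rw [Multiset.mem_map] at hmem2
      obtain ⟨u, hu, hequ⟩ := hmem2
      rw [Multiset.mem_range] at hu
      omega
    omega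
  · -- all low entries distinct
    push_neg at hdup
    set D := M.count (e-1) with hDdef
    set Mlow := M.filter (fun w => ¬ w = e-1) with hMlowdef
    have hsplit : M = Multiset.replicate D (e-1) + Mlow := by
      conv_lhs => rw [← Multiset.filter_add_not (fun w => w = e-1) M]
      rw [Multiset.filter_eq' M (e-1)]
    have hlowmem : ∀ u ∈ Mlow, u < e - 1 := by
      intro u hu
      rw [hMlowdef, Multiset.mem_filter] at hu
      have := hmem u hu.1
      have := hu.2
      omega
    have hlowle : Mlow ≤ Multiset.range (e-1) := by
      rw [Multiset.le_iff_count]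
      intro u
      by_cases hu : u ∈ Mlow
      · have hul := hlowmem u hu
        have hne : ¬ u = e-1 := by omega
        have h1 : Multiset.count u Mlow ≤ 1 := by
          rw [hMlowdef, Multiset.count_filter, if_pos hne]
          have := hdup u hul
          omega
        have h2 : u ∈ Multiset.range (e-1) := Multiset.mem_range.2 hul
        have h3 : 0 < Multiset.count u (Multiset.range (e-1)) := Multiset.count_pos.2 h2
        omega
      · rw [Multiset.count_eq_zero_of_notMem hu]
        omega
    obtain ⟨C, hC⟩ := Multiset.le_iff_exists_add.1 hlowle
    have hrangesum : ((Multiset.range (e-1)).map (2^·)).sum = 2^(e-1) - 1 := by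
      rw [← Multiset.coe_range, Multiset.map_coe, Multiset.sum_coe, list_two_pow_sum]
    set SL := (Mlow.map (2^·)).sum with hSLdef
    have hsum2 : SL + 2 + D * 2^(e-1) = A * 2^e := by
      rw [hsplit, Multiset.map_add, Multiset.sum_add, Multiset.map_replicate,
        Multiset.sum_replicate, smul_eq_mul] at hsum
      omega
    have hCsum : SL + (C.map (2^·)).sum = 2^(e-1) - 1 := by
      rw [← hrangesum, hC, Multiset.map_add, Multiset.sum_add]
    have hSLle : SL + 1 ≤ 2^(e-1) := by
      have h1 : 1 ≤ 2^(e-1) := Nat.one_le_two_pow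
      omega
    have hpow : (2:ℕ)^e = 2 * 2^(e-1) := by
      rw [← pow_succ']
      congr 1
      omega
    have h16 : (16:ℕ) ≤ 2^(e-1) := by
      calc (16:ℕ) = 2^4 := by norm_num
      _ ≤ 2^(e-1) := Nat.pow_le_pow_right (by norm_num) (by omega)
    -- SL + 2 is a positive multiple of 2^(e-1), at most 2^(e-1)+1
    have hdvd : 2^(e-1) ∣ SL + 2 := by
      have h1 : (2:ℕ)^(e-1) ∣ A * 2^e := by
        rw [hpow]
        exact ⟨2 * A, by ring⟩
      have h2 : (2:ℕ)^(e-1) ∣ D * 2^(e-1) := ⟨D, mul_comm _ _⟩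
      have h3 : SL + 2 = A * 2^e - D * 2^(e-1) := by omega
      rw [h3]
      exact Nat.dvd_sub h1 h2
    have hSLeq : SL + 2 = 2^(e-1) := by
      obtain ⟨c, hc⟩ := hdvd
      have hc1 : 1 ≤ c := by
        rcases Nat.eq_zero_or_pos c with rfl | h
        · omega
        · omega
      have hc2 : c < 2 := by
        by_contra hcon
        push_neg at hcon
        have : 2^(e-1) * 2 ≤ 2^(e-1) * c := Nat.mul_le_mul_left _ hcon
        omega
      interval_cases c
      · omega
    have hD : D + 1 = 2 * A := by
      have hexp : (D + 1) * 2^(e-1) = (2*A) * 2^(e-1) := by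
        have h2A : A * 2^e = (2*A) * 2^(e-1) := by rw [hpow]; ring
        have e1 : (D + 1) * 2^(e-1) = D * 2^(e-1) + 2^(e-1) := by ring
        omega
      exact Nat.eq_of_mul_eq_mul_right (by positivity) hexp
    have hCsum1 : (C.map (2^·)).sum = 1 := by
      have h := hCsum
      rw [← hSLeq] at h
      omega
    have hCcard : Multiset.card C ≤ 1 := by
      have := card_le_map_two_pow_sum C
      omega
    have hC0 : C = {0} := by
      rcases Nat.lt_or_ge (Multiset.card C) 1 with h | h
      · exfalso
        have : C = 0 := Multiset.card_eq_zero.1 (show Multiset.card C = 0 by omega)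
        rw [this] at hCsum1
        simp at hCsum1
      · obtain ⟨a, ha⟩ := Multiset.card_eq_one.1 (show Multiset.card C = 1 by omega)
        rw [ha] at hCsum1 ⊢
        rw [Multiset.map_singleton, Multiset.sum_singleton] at hCsum1
        rcases Nat.eq_zero_or_pos a with rfl | hap
        · rfl
        · exfalso
          have : 2^1 ≤ 2^a := Nat.pow_le_pow_right (by norm_num) hap
          omega
    have hMloweq : Mlow = (Multiset.range (e-2)).map (·+1) := by
      have h1 : Multiset.range (e-1) = 0 ::ₘ (Multiset.range (e-2)).map (·+1) := by
        rw [show e-1 = (e-2)+1 by omega]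
        exact multiset_range_succ_zero _
      rw [hC0, h1] at hC
      have h2 : Mlow + ({0} : Multiset ℕ) = 0 ::ₘ Mlow := by
        rw [add_comm, Multiset.singleton_add]
      rw [h2] at hC
      exact ((Multiset.cons_inj_right 0).1 hC).symm
    have hfinal : M = Multiset.replicate (2*A-1) (e-1) + (Multiset.range (e-2)).map (·+1) := by
      rw [hsplit, hMloweq, show D = 2*A-1 by omega]
    have hcardM : Multiset.card M = 2*A - 1 + (e-2) := by
      rw [hfinal, Multiset.card_add, Multiset.card_replicate, Multiset.card_map,
        Multiset.card_range]
    refine ⟨by omega, fun _ => hfinal, by omega⟩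

lemma mult_eq_one_of_toAdd {x : Multiplicative (ZMod 2)} (h : Multiplicative.toAdd x = 0) :
    x = 1 := by
  have := congrArg Multiplicative.ofAdd h
  simpa using this

lemma zmod2_cases (x : ZMod 2) : x = 0 ∨ x = 1 := by revert x; decide

lemma sgn_toAdd_eq_one_order {n : ℕ} (x : DihedralGroup n)
    (h : Multiplicative.toAdd (sgn x) = 1) : orderOf x = 2 := by
  cases x with
  | r i =>
    rw [sgn_r, toAdd_one] at h
    exact absurd h (by decide)
  | sr i => exact orderOf_sr i

lemma sgn_toAdd_eq_zero_rot {n : ℕ} (x : DihedralGroup n)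
    (h : Multiplicative.toAdd (sgn x) = 0) : ∃ i, x = DihedralGroup.r i := by
  cases x with
  | r i => exact ⟨i, rfl⟩
  | sr i =>
    rw [sgn_sr] at h
    simp only [toAdd_ofAdd] at h
    exact absurd h (by decide)

lemma par_toAdd_ne_zero_order {e : ℕ} (he : 1 ≤ e) (hd : (2:ℕ) ∣ 2^e) (i : ZMod (2^e))
    (hne : ¬ Multiplicative.toAdd (par hd (DihedralGroup.r i)) = 0) :
    orderOf (DihedralGroup.r i : DihedralGroup (2^e)) = 2^e := by
  haveI : NeZero (2^e) := ⟨by positivity⟩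
  rw [par_r] at hne
  simp only [toAdd_ofAdd] at hne
  have h1 : (ZMod.castHom hd (ZMod 2)) i = 1 := by
    rcases zmod2_cases ((ZMod.castHom hd (ZMod 2)) i) with h | h
    · exact absurd h hne
    · exact h
  have h2 : ((i.val : ℕ) : ZMod 2) = 1 := by
    rw [ZMod.castHom_apply] at h1
    rw [ZMod.natCast_val, h1]
  have hodd : ¬ (2 ∣ i.val) := by
    intro hdvd
    rw [(ZMod.natCast_eq_zero_iff i.val 2).2 hdvd] at h2
    exact absurd h2 (by decide)
  rw [DihedralGroup.orderOf_r]
  have hcop : Nat.Coprime (2^e) i.val := by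
    apply Nat.Coprime.pow_left
    rw [Nat.Prime.coprime_iff_not_dvd Nat.prime_two]
    exact hodd
  rw [hcop.gcd_eq_one, Nat.div_one]

lemma part2 (e : ℕ) (he : 5 ≤ e) : ¬ IsGenus (DihedralGroup (2^e)) ((e-3)*2^e + 3) := by
  haveI : NeZero (2^e) := ⟨by positivity⟩
  have h2e : (32:ℕ) ≤ 2^e := by
    calc (32:ℕ) = 2^5 := by norm_num
    _ ≤ 2^e := Nat.pow_le_pow_right (by norm_num) he
  have hdvd2 : (2:ℕ) ∣ 2^e := dvd_pow_self 2 (by omega)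
  rintro ⟨hg2, h, rr, n, a, b, c, hn2, hord, hgen, hprod, hRH⟩
  -- each order is a power of 2 between 2^1 and 2^e
  have hdvd : ∀ j, n j ∣ 2^e := by
    intro j
    rw [← hord j]
    exact orderOf_dvd_two_pow (by omega) (c j)
  choose k hke hnk using fun j => (Nat.dvd_prime_pow Nat.prime_two).1 (hdvd j)
  have hk1 : ∀ j, 1 ≤ k j := by
    intro j
    by_contra h0
    push_neg at h0
    have h1 := hn2 j
    rw [hnk j, show k j = 0 by omega] at h1
    norm_num at h1
  -- convert the Riemann-Hurwitz equation to ℕ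
  set S := ∑ j, 2^(e - k j) with hSdef
  have h2eQ : ((2:ℚ)^e) ≠ 0 := by positivity
  have hsum_q : ∑ j, (1 - 1/(n j : ℚ)) = (rr : ℚ) - (S:ℚ)/2^e := by
    have hj : ∀ j, (1:ℚ)/(n j : ℚ) = ((2:ℚ)^(e - k j))/((2:ℚ)^e) := by
      intro j
      rw [hnk j]
      rw [div_eq_div_iff (by positivity) h2eQ]
      push_cast
      rw [one_mul, ← pow_add]
      congr 1
      have := hke j
      omega
    rw [Finset.sum_sub_distrib, Finset.sum_const, Finset.card_univ, Fintype.card_fin]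
    congr 1
    · simp
    · rw [hSdef]
      push_cast
      rw [Finset.sum_div]
      exact Finset.sum_congr rfl (fun j _ => hj j)
  have hgc : (((e-3)*2^e + 3 : ℕ) : ℚ) = ((e:ℚ)-3)*2^e + 3 := by
    push_cast [Nat.cast_sub (show 3 ≤ e by omega)]
    ring
  rw [hsum_q, DihedralGroup.nat_card, hgc] at hRH
  have hdivS : (S:ℚ)/2^e * 2^e = (S:ℚ) := div_mul_cancel₀ _ h2eQ
  have hexpand : ((2 * 2^e : ℕ) : ℚ) * (2*((h:ℚ)-1) + ((rr:ℚ) - (S:ℚ)/2^e))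
      = 2*(2:ℚ)^e*(2*(h:ℚ)-2+(rr:ℚ)) - 2*((S:ℚ)/2^e*(2:ℚ)^e) := by
    push_cast
    ring
  rw [hexpand, hdivS] at hRH
  have hQq : (S:ℚ) + 2 + ((e:ℚ)-1)*2^e = 2^e*(2*(h:ℚ)+(rr:ℚ)) := by
    linear_combination hRH / 2
  -- 2h + rr ≥ e
  have hge : e ≤ 2*h + rr := by
    by_contra hcon
    push_neg at hcon
    have hc2 : (2*(h:ℚ)+(rr:ℚ)) + 1 ≤ (e:ℚ) := by
      have : ((2*h + rr + 1 : ℕ) : ℚ) ≤ ((e : ℕ) : ℚ) := Nat.cast_le.2 (by omega)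
      push_cast at this
      linarith
    have hpos : (0:ℚ) < (2:ℚ)^e := by positivity
    have hSpos : (0:ℚ) ≤ (S:ℚ) := Nat.cast_nonneg _
    nlinarith
  obtain ⟨A, hAe⟩ : ∃ A, A + e = 2*h + rr + 1 := ⟨2*h + rr + 1 - e, by omega⟩
  have hA1 : 1 ≤ A := by omega
  have hSA : S + 2 = A * 2^e := by
    have hcast : ((A : ℕ) : ℚ) = 2*(h:ℚ) + (rr:ℚ) + 1 - (e:ℚ) := by
      have hc0 : ((A + e : ℕ) : ℚ) = ((2*h + rr + 1 : ℕ) : ℚ) := by rw [hAe]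
      push_cast at hc0
      linarith
    have hq : ((S + 2 : ℕ) : ℚ) = ((A * 2^e : ℕ) : ℚ) := by
      push_cast
      rw [show ((A:ℕ):ℚ) * 2^e = (2*(h:ℚ) + (rr:ℚ) + 1 - (e:ℚ)) * 2^e by rw [hcast]]
      linear_combination hQq
    exact_mod_cast hq
  -- the multiset of exponents
  set Mst := Multiset.map (fun j => e - k j) (Finset.univ.val : Multiset (Fin rr)) with hMstdef
  have hMcard : Multiset.card Mst = rr := by
    rw [hMstdef, Multiset.card_map, ← Finset.card_def, Finset.card_univ, Fintype.card_fin]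
  have hMmem : ∀ w ∈ Mst, w < e := by
    intro w hw
    rw [hMstdef, Multiset.mem_map] at hw
    obtain ⟨j, _, rfl⟩ := hw
    have := hk1 j
    omega
  have hMsum : (Mst.map (2 ^ ·)).sum + 2 = A * 2^e := by
    rw [hMstdef, Multiset.map_map]
    rw [show S = ∑ j, 2^(e - k j) from hSdef] at hSA
    rw [Finset.sum_eq_multiset_sum] at hSA
    exact hSA
  obtain ⟨kb, kst, kct⟩ := key e he rr Mst A hMcard hA1 hMmem hMsum
  rw [hMcard] at kb kst kct
  -- h = 0 and A ∈ {1, 2}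
  have hh0 : h = 0 ∧ (A = 1 ∨ A = 2) := by omega
  obtain ⟨hh0, hA12⟩ := hh0
  subst hh0
  have hprod0 : (List.ofFn c).prod = 1 := by
    rw [List.ofFn_zero, List.prod_nil, one_mul] at hprod
    exact hprod
  have hgen0 : Subgroup.closure (Set.range c) = ⊤ := by
    rw [Set.range_eq_empty a, Set.range_eq_empty b] at hgen
    simpa using hgen
  -- kernel argument
  have hker : ∀ (f : DihedralGroup (2^e) →* Multiplicative (ZMod 2)),
      (∀ j, f (c j) = 1) → ∀ x, f x = 1 := by
    intro f hf x
    have hle : Subgroup.closure (Set.range c) ≤ f.ker := by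
      rw [Subgroup.closure_le]
      rintro y ⟨j, rfl⟩
      exact hf j
    have hx : x ∈ Subgroup.closure (Set.range c) := by
      rw [hgen0]
      exact Subgroup.mem_top x
    exact MonoidHom.mem_ker.1 (hle hx)
  -- vanishing sums
  have hom_sum : ∀ (f : DihedralGroup (2^e) →* Multiplicative (ZMod 2)),
      ∑ j, Multiplicative.toAdd (f (c j)) = 0 := by
    intro f
    have h1 : ((List.ofFn c).map f).prod = 1 := by
      rw [← map_list_prod, hprod0, map_one]
    rw [List.map_ofFn, List.prod_ofFn] at h1
    have h2 := congrArg Multiplicative.toAdd h1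
    rw [toAdd_prod, toAdd_one] at h2
    exact h2
  -- the reflection set
  set Rf := Finset.univ.filter (fun j => Multiplicative.toAdd (sgn (c j)) = 1) with hRfdef
  have hRf_even : 2 ∣ Rf.card := by
    have hsp := Finset.sum_filter_add_sum_filter_not Finset.univ
      (fun j => Multiplicative.toAdd (sgn (c j)) = 1) (fun j => Multiplicative.toAdd (sgn (c j)))
    rw [hom_sum sgn] at hsp
    have h1 : ∑ j ∈ Rf, Multiplicative.toAdd (sgn (c j)) = (Rf.card : ZMod 2) := by
      rw [Finset.sum_congr rfl (fun j hj => (Finset.mem_filter.1 hj).2), Finset.sum_const,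
        nsmul_eq_mul, mul_one]
    have h2 : ∑ j ∈ Finset.univ.filter (fun j => ¬ Multiplicative.toAdd (sgn (c j)) = 1),
        Multiplicative.toAdd (sgn (c j)) = 0 := by
      apply Finset.sum_eq_zero
      intro j hj
      rcases zmod2_cases (Multiplicative.toAdd (sgn (c j))) with hc | hc
      · exact hc
      · exact absurd hc (Finset.mem_filter.1 hj).2
    rw [← hRfdef] at hsp
    rw [h1, h2, add_zero] at hsp
    exact (ZMod.natCast_eq_zero_iff _ 2).1 hsp
  -- counting order-2 elements
  have horder2 : Mst.count (e-1) = (Finset.univ.filter (fun j => orderOf (c j) = 2)).card := by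
    rw [hMstdef, Multiset.count_map]
    rw [Multiset.filter_congr (q := fun j => orderOf (c j) = 2) ?_]
    · rw [← Finset.filter_val, ← Finset.card_def]
    · intro j _
      show e - 1 = e - k j ↔ orderOf (c j) = 2
      rw [hord j, hnk j]
      constructor
      · intro hw
        have hkj : k j = 1 := by
          have := hke j
          have := hk1 j
          omega
        rw [hkj, pow_one]
      · intro hw
        have hkj : k j = 1 := by
          have := Nat.pow_right_injective (le_refl 2) (a₁ := k j) (a₂ := 1)
          simp only [pow_one] at this
          exact this hw
        omega
  have hRf_sub : Rf ⊆ Finset.univ.filter (fun j => orderOf (c j) = 2) := by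
    intro j hj
    rw [Finset.mem_filter]
    exact ⟨Finset.mem_univ j, sgn_toAdd_eq_one_order _ (Finset.mem_filter.1 hj).2⟩
  -- the contradiction machine when all values vanish
  have hcontra_sgn : ¬ (∀ j, Multiplicative.toAdd (sgn (c j)) = 0) := by
    intro hall
    have h1 := hker sgn (fun j => mult_eq_one_of_toAdd (hall j)) (sr 0)
    rw [sgn_sr] at h1
    have := congrArg Multiplicative.toAdd h1
    rw [toAdd_ofAdd, toAdd_one] at this
    exact absurd this (by decide)
  rcases hA12 with hA | hA
  · -- A = 1 : at most one order-2 element, so no reflections at all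
    subst hA
    have hrr : rr = e := by omega
    have hcnt := kct (by omega)
    rw [horder2] at hcnt
    have hRfcard : Rf.card ≤ 1 := le_trans (Finset.card_le_card hRf_sub) (by omega)
    have hRf0 : Rf.card = 0 := by omega
    apply hcontra_sgn
    intro j
    rcases zmod2_cases (Multiplicative.toAdd (sgn (c j))) with hc | hc
    · exact hc
    · exfalso
      have hjRf : j ∈ Rf := Finset.mem_filter.2 ⟨Finset.mem_univ j, hc⟩
      rw [Finset.card_eq_zero] at hRf0
      rw [hRf0] at hjRf
      exact absurd hjRf (Finset.notMem_empty j)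
  · -- A = 2 : exactly three order-2 elements, no order-2^e elements
    subst hA
    have hrr : rr = e + 1 := by omega
    have hstruct := kst (by omega)
    have hcount3 : Mst.count (e-1) = 3 := by
      rw [hstruct, Multiset.count_add, Multiset.count_replicate_self]
      have hz : Multiset.count (e-1) ((Multiset.range (e-2)).map (·+1)) = 0 := by
        apply Multiset.count_eq_zero_of_notMem
        intro hmem2
        rw [Multiset.mem_map] at hmem2
        obtain ⟨u, hu, hequ⟩ := hmem2
        rw [Multiset.mem_range] at hu
        omega
      omega
    have hcount0 : Mst.count 0 = 0 := by
      rw [hstruct, Multiset.count_add, Multiset.count_replicate]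
      rw [if_neg (by omega)]
      have hz : Multiset.count 0 ((Multiset.range (e-2)).map (·+1)) = 0 := by
        apply Multiset.count_eq_zero_of_notMem
        intro hmem2
        rw [Multiset.mem_map] at hmem2
        obtain ⟨u, hu, hequ⟩ := hmem2
        omega
      omega
    have hkfull : ∀ j, k j < e := by
      intro j
      by_contra hcon
      push_neg at hcon
      have hkj : k j = e := by have := hke j; omega
      have h0mem : (0:ℕ) ∈ Mst := by
        rw [hMstdef, Multiset.mem_map]
        exact ⟨j, by simp, by omega⟩
      rw [← Multiset.count_pos, hcount0] at h0mem
      omega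
    have hrot_par : ∀ j, Multiplicative.toAdd (sgn (c j)) = 0 →
        Multiplicative.toAdd (par hdvd2 (c j)) = 0 := by
      intro j hj
      obtain ⟨i, hi⟩ := sgn_toAdd_eq_zero_rot _ hj
      by_contra hcon
      rw [hi] at hcon
      have := par_toAdd_ne_zero_order (by omega) hdvd2 i hcon
      rw [← hi, hord j, hnk j] at this
      have hkj := Nat.pow_right_injective (le_refl 2) this
      have := hkfull j
      omega
    -- |Rf| ∈ {0, 2}
    have hRf3 : Rf.card ≤ 3 := by
      rw [horder2] at hcount3
      exact le_trans (Finset.card_le_card hRf_sub) (by omega)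
    have hRf02 : Rf.card = 0 ∨ Rf.card = 2 := by omega
    rcases hRf02 with hRf0 | hRf2
    · apply hcontra_sgn
      intro j
      rcases zmod2_cases (Multiplicative.toAdd (sgn (c j))) with hc | hc
      · exact hc
      · exfalso
        have hjRf : j ∈ Rf := Finset.mem_filter.2 ⟨Finset.mem_univ j, hc⟩
        rw [Finset.card_eq_zero] at hRf0
        rw [hRf0] at hjRf
        exact absurd hjRf (Finset.notMem_empty j)
    · -- two reflections with equal parity
      obtain ⟨j1, j2, hj12, hRfeq⟩ := Finset.card_eq_two.1 hRf2
      have hmem1 : j1 ∈ Rf := by rw [hRfeq]; simp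
      have hmem2 : j2 ∈ Rf := by rw [hRfeq]; simp
      have hnotRf : ∀ j, j ∉ Rf → Multiplicative.toAdd (par hdvd2 (c j)) = 0 := by
        intro j hj
        apply hrot_par
        rcases zmod2_cases (Multiplicative.toAdd (sgn (c j))) with hc | hc
        · exact hc
        · exact absurd (Finset.mem_filter.2 ⟨Finset.mem_univ j, hc⟩) hj
      have hsp := Finset.sum_filter_add_sum_filter_not Finset.univ
        (fun j => Multiplicative.toAdd (sgn (c j)) = 1)
        (fun j => Multiplicative.toAdd (par hdvd2 (c j)))
      rw [hom_sum (par hdvd2)] at hsp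
      rw [← hRfdef] at hsp
      have hnot0 : ∑ j ∈ Finset.univ.filter (fun j => ¬ Multiplicative.toAdd (sgn (c j)) = 1),
          Multiplicative.toAdd (par hdvd2 (c j)) = 0 := by
        apply Finset.sum_eq_zero
        intro j hj
        apply hnotRf
        rw [hRfdef]
        intro hmem
        exact absurd (Finset.mem_filter.1 hmem).2 (Finset.mem_filter.1 hj).2
      have hpairsum : ∑ j ∈ Rf, Multiplicative.toAdd (par hdvd2 (c j))
          = Multiplicative.toAdd (par hdvd2 (c j1)) + Multiplicative.toAdd (par hdvd2 (c j2)) := by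
        rw [hRfeq]
        exact Finset.sum_pair hj12
      rw [hpairsum, hnot0, add_zero] at hsp
      -- equal parities
      rcases zmod2_cases (Multiplicative.toAdd (par hdvd2 (c j1))) with hp1 | hp1
      · -- both zero : everything in ker par
        have hp2 : Multiplicative.toAdd (par hdvd2 (c j2)) = 0 := by
          rw [hp1] at hsp
          rw [← hsp]
          ring
        have hallpar : ∀ j, Multiplicative.toAdd (par hdvd2 (c j)) = 0 := by
          intro j
          by_cases hj : j ∈ Rf
          · rw [hRfeq] at hj
            simp only [Finset.mem_insert, Finset.mem_singleton] at hj
            rcases hj with rfl | rfl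
            · exact hp1
            · exact hp2
          · exact hnotRf j hj
        have h1 := hker (par hdvd2) (fun j => mult_eq_one_of_toAdd (hallpar j)) (r 1)
        rw [par_r] at h1
        have h2 := congrArg Multiplicative.toAdd h1
        rw [toAdd_ofAdd, toAdd_one, map_one] at h2
        exact absurd h2 (by decide)
      · -- both one : everything in ker (sgn * par)
        have hp2 : Multiplicative.toAdd (par hdvd2 (c j2)) = 1 := by
          rw [hp1] at hsp
          rcases zmod2_cases (Multiplicative.toAdd (par hdvd2 (c j2))) with hq | hq
          · exfalso; rw [hq] at hsp; exact absurd hsp (by decide)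
          · exact hq
        have halltau : ∀ j, Multiplicative.toAdd (((sgn : DihedralGroup (2^e) →* Multiplicative (ZMod 2)) * par hdvd2) (c j)) = 0 := by
          intro j
          rw [MonoidHom.mul_apply, toAdd_mul]
          by_cases hj : j ∈ Rf
          · have hsgn1 : Multiplicative.toAdd (sgn (c j)) = 1 := (Finset.mem_filter.1 hj).2
            rw [hRfeq] at hj
            simp only [Finset.mem_insert, Finset.mem_singleton] at hj
            rcases hj with rfl | rfl
            · rw [hsgn1, hp1]; decide
            · rw [hsgn1, hp2]; decide
          · have hsgn0 : Multiplicative.toAdd (sgn (c j)) = 0 := by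
              rcases zmod2_cases (Multiplicative.toAdd (sgn (c j))) with hc | hc
              · exact hc
              · exact absurd (Finset.mem_filter.2 ⟨Finset.mem_univ j, hc⟩) hj
            rw [hsgn0, hnotRf j hj]
            decide
        have h1 := hker ((sgn : DihedralGroup (2^e) →* Multiplicative (ZMod 2)) * par hdvd2) (fun j => mult_eq_one_of_toAdd (halltau j)) (sr 0)
        rw [MonoidHom.mul_apply, sgn_sr, par_sr] at h1
        have h2 := congrArg Multiplicative.toAdd h1
        rw [toAdd_mul, toAdd_ofAdd, toAdd_ofAdd, toAdd_one, map_zero] at h2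
        exact absurd h2 (by decide)

end Aux

/-- The stable upper genus of the dihedral group of order `2^(e+1)`, for
`e ≥ 5`, equals `(e-3)·2^e + 4`. -/
theorem stmt9 (e : ℕ) (he : 5 ≤ e) :
    (∀ g : ℕ, (e - 3) * 2 ^ e + 4 ≤ g → IsGenus (DihedralGroup (2 ^ e)) g) ∧
      ¬ IsGenus (DihedralGroup (2 ^ e)) ((e - 3) * 2 ^ e + 3) := by
  exact ⟨fun g hg => Aux.part1 e g he hg, Aux.part2 e he⟩
end
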